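/- arXiv:1104.3418 — 4 statements merged into one kernel-verified Lean document; each statement's English description precedes it below -/
import Mathlib

section
/- Let A be a finite dimensional algebra, T a tilting A-module with coresolution 0 → A → T_0 → T_1 → 0, and let ℓ(A) = T_0/τ_{T_1}(T_0) where τ_{T_1}(T_0) is the trace of T_1 in T_0. Then for every A-module M with Hom_A(T_1, M) = 0 = Ext^1_A(T_1, M), the natural map Hom_A(ℓ(A), M) → Hom_A(A, M) ≅ M induced by the composite A → T_0 → ℓ(A) is an isomorphism; in particular ℓ(A) is a projective generator of the perpendicular category of T_1. -/
/-!
STATEMENT 3: Let `A` be a finite dimensional algebra, `T` a tilting module with coresolution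
`0 → A → T0 → T1 → 0`, and `ℓ(A) = T0 / τ_{T1}(T0)` the quotient of `T0` by the trace of `T1`.
Then for every finitely generated module `M` with `Hom(T1, M) = 0 = Ext^1(T1, M)`, the map
`Hom_A(ℓ(A), M) → M`, `h ↦ h(π(f(1)))`, is bijective (so `ℓ(A)` is a projective generator of
the perpendicular category of `T1`).
-/

open CategoryTheory

universe u

noncomputable section

universe w v u'

namespace MyAux


open DerivedCategory

variable {C : Type u'} [Category.{v} C] [Abelian C]

/-- iso `singleFunctor ⋙ homologyFunctor ≅ 𝟭` -/
noncomputable def singleCompHomologyIso (C : Type u') [Category.{v} C] [Abelian C]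
    [HasDerivedCategory.{w} C] :
    DerivedCategory.singleFunctor C 0 ⋙ DerivedCategory.homologyFunctor C 0 ≅ 𝟭 C :=
  Functor.isoWhiskerRight ((SingleFunctors.evaluation _ _ 0).mapIso (singleFunctorsPostcompQIso C))
      (DerivedCategory.homologyFunctor C 0) ≪≫ Functor.associator _ _ _ ≪≫
    Functor.isoWhiskerLeft _ (DerivedCategory.homologyFunctorFactors C 0) ≪≫
    HomologicalComplex.homologyFunctorSingleIso C _ 0

variable [HasExt.{w} C]

/-- The hom attached to a degree-0 Ext class. -/
noncomputable def extToHom {X Y : C} (x : Abelian.Ext X Y 0) : X ⟶ Y :=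
  letI := HasDerivedCategory.standard C
  (singleCompHomologyIso C).inv.app X ≫
    (DerivedCategory.homologyFunctor C 0).map
      (x.hom ≫ (shiftFunctorZero' (DerivedCategory C) ((0 : ℕ) : ℤ) (by simp)).hom.app _) ≫
    (singleCompHomologyIso C).hom.app Y

lemma extToHom_mk₀ {X Y : C} (f : X ⟶ Y) : extToHom (Abelian.Ext.mk₀ f) = f := by
  letI := HasDerivedCategory.standard C
  dsimp only [extToHom]
  rw [Abelian.Ext.mk₀_hom]
  simp only [ShiftedHom.mk₀, Category.assoc, Iso.inv_hom_id_app, Functor.id_obj, Category.comp_id]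
  have := (singleCompHomologyIso C).hom.naturality f
  dsimp only [Functor.comp_map, Functor.id_map] at this
  rw [this, Iso.inv_hom_id_app_assoc]

lemma extToHom_mk₀_comp {X Y Z : C} (f : X ⟶ Y) (x : Abelian.Ext Y Z 0) :
    extToHom ((Abelian.Ext.mk₀ f).comp x (zero_add 0)) = f ≫ extToHom x := by
  letI := HasDerivedCategory.standard C
  dsimp only [extToHom]
  rw [Abelian.Ext.comp_hom, Abelian.Ext.mk₀_hom, ShiftedHom.mk₀_comp]
  rw [Category.assoc, Functor.map_comp]
  have := (singleCompHomologyIso C).inv.naturality f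
  dsimp only [Functor.comp_map, Functor.id_map] at this
  simp only [Category.assoc]
  rw [← reassoc_of% this]

end MyAux


/-- `projDimLE n M` : the module `M` has projective dimension at most `n`. -/
def projDimLE {R : Type u} [Ring R] : ℕ → ModuleCat.{u} R → Prop
  | 0, M => Projective M
  | n + 1, M => ∃ (P : ModuleCat.{u} R) (f : P ⟶ M),
      Projective P ∧ Epi f ∧ projDimLE n (Limits.kernel f)

/-- `M` belongs to `add T`. -/
def memAdd {R : Type u} [Ring R] (T M : ModuleCat.{u} R) : Prop :=
  ∃ (m : ℕ) (N : ModuleCat.{u} R), Nonempty ((↥M × ↥N) ≃ₗ[R] (Fin m → ↥T))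

variable {k A : Type u} [Field k] [Ring A] [Algebra k A] [FiniteDimensional k A]
  [HasExt.{u} (ModuleCat.{u} A)]

theorem ellA_projective_generator_of_perpendicular
    (T T0 T1 : ModuleCat.{u} A) [Module.Finite A T]
    -- `T` is a tilting module:
    (hpd : projDimLE 1 T)
    (hself : Subsingleton (Abelian.Ext T T 1))
    (hT0 : memAdd T T0) (hT1 : memAdd T T1)
    -- the coresolution `0 → A → T0 → T1 → 0` :
    (f : ModuleCat.of A A ⟶ T0) (g : T0 ⟶ T1) (w : f ≫ g = 0)
    (hS : (ShortComplex.mk f g w).ShortExact)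
    -- the trace of `T1` in `T0` :
    (τ : Submodule A ↥T0) (hτ : τ = ⨆ φ : ↥T1 →ₗ[A] ↥T0, LinearMap.range φ)
    -- a module in the perpendicular category of `T1` :
    (M : ModuleCat.{u} A) [Module.Finite A M]
    (hM0 : ∀ φ : ↥T1 →ₗ[A] ↥M, φ = 0)
    (hM1 : Subsingleton (Abelian.Ext T1 M 1)) :
    Function.Bijective
      (fun h : (↥T0 ⧸ τ) →ₗ[A] ↥M => h (Submodule.Quotient.mk (f (1 : A)))) := by
  have hsmul : ∀ a : A, f a = a • f (1 : A) := by
    intro a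
    conv_lhs => rw [show a = a • (1 : A) by simp]
    rw [map_smul]
  constructor
  · -- injectivity
    have key : ∀ h : (↥T0 ⧸ τ) →ₗ[A] ↥M,
        h (Submodule.Quotient.mk (f (1 : A))) = 0 → h = 0 := by
      intro h hh
      set u : T0 ⟶ M := ModuleCat.ofHom (h.comp τ.mkQ : ↥T0 →ₗ[A] ↥M) with hu_def
      have hu : f ≫ u = 0 := by
        ext1; refine LinearMap.ext fun a => ?_
        show u (f a) = 0
        rw [hsmul a]
        have key : ∀ b : A, h (Submodule.Quotient.mk (b • f (1 : A))) = 0 := by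
          intro b
          rw [Submodule.Quotient.mk_smul, map_smul, hh, smul_zero]
        exact key a
      obtain ⟨φ, hφ⟩ := Limits.CokernelCofork.IsColimit.desc' hS.gIsCokernel u hu
      have hφ0 : φ = 0 := ModuleCat.hom_ext (hM0 φ.hom)
      have hu0 : u = 0 := by
        rw [← hφ, hφ0]
        exact Limits.comp_zero
      apply Submodule.linearMap_qext
      rw [hu_def] at hu0
      exact congrArg ModuleCat.Hom.hom hu0
    intro h1 h2 he
    have := key (h1 - h2) (by
      simp only [LinearMap.sub_apply]
      rw [sub_eq_zero]
      exact he)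
    rwa [sub_eq_zero] at this
  · -- surjectivity
    intro m
    set ψlin : A →ₗ[A] ↥M :=
      { toFun := fun a => a • m
        map_add' := fun a b => add_smul a b m
        map_smul' := fun a b => by simp [smul_eq_mul, mul_smul] } with hψ_def
    set ψ : ModuleCat.of A A ⟶ M := ModuleCat.ofHom ψlin with hψ
    obtain ⟨x₂, hx₂⟩ := Abelian.Ext.contravariant_sequence_exact₁ hS M
      (Abelian.Ext.mk₀ ψ) (n₁ := 1) rfl (Subsingleton.elim _ _)
    set h0 : T0 ⟶ M := MyAux.extToHom x₂ with hh0
    have hfh0 : f ≫ h0 = ψ := by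
      have := congrArg MyAux.extToHom hx₂
      rwa [MyAux.extToHom_mk₀_comp, MyAux.extToHom_mk₀] at this
    have hτle : τ ≤ LinearMap.ker h0.hom := by
      rw [hτ]
      apply iSup_le
      intro φ
      rintro x ⟨t, rfl⟩
      have : h0.hom.comp φ = 0 := hM0 _
      exact LinearMap.congr_fun this t
    refine ⟨τ.liftQ h0.hom hτle, ?_⟩
    show τ.liftQ h0.hom hτle (Submodule.Quotient.mk (f (1 : A))) = m
    rw [Submodule.liftQ_apply]
    have : h0 (f (1 : A)) = ψ (1 : A) := congrArg (fun v => v.hom (1 : A)) hfh0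
    rw [this]
    show (1 : A) • m = m
    exact one_smul A m


end
end

section
/- Let A be the path algebra of the quiver with vertices 1, 2, arrows α: 1 → 2, β: 2 → 1, modulo the relation αβα = 0. Let T_1 = P_2 be the indecomposable projective at vertex 2. Then C = End_A(T_1) is isomorphic to k[x]/(x^2), and T_1 regarded as a left C-module decomposes as C ⊕ k, where k is the simple C-module; in particular T_1 has infinite projective dimension as a left C-module. -/
set_option maxHeartbeats 1000000


/-!
STATEMENT 7: Let `A = kQ/(αβα)` for the quiver `1 ⇄ 2` (presented by orthogonal idempotents
`e₁, e₂`, arrows `a, b` with `a*b*a = 0` and basis `{e₁, e₂, a, b, b*a, a*b, b*a*b}`), and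
let `T₁ = P₂ = e₂A` (a right `A`-module, modelled as a module over `Aᵐᵒᵖ`).  Then
`C = End_A(T₁) ≅ k[x]/(x²)`, and `T₁` as a left `C`-module decomposes as `C ⊕ k`, where `k`
is the simple `C`-module; in particular `T₁` has infinite projective dimension as a left
`C`-module.
-/

open CategoryTheory

universe u

noncomputable section

/-- our obstruction predicate: an element of the socle not in `c • N`. -/
def IsBadMod {R : Type u} [Ring R] (c : R) (N : Type u) [AddCommGroup N] [Module R N] : Prop :=
  ∃ v : N, c • v = 0 ∧ ∀ w : N, c • w ≠ v

section AuxBad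

variable {R : Type u} [Ring R] {c : R}
theorem proj_div (hdiv : ∀ g : R, c * g = 0 → ∃ h : R, g = c * h) {P : Type u} [AddCommGroup P] [Module R P]
    (hP : Module.Projective R P) (p : P) (hp : c • p = 0) : ∃ q : P, p = c • q := by
  obtain ⟨s, hs⟩ := (Module.projective_def).1 hP
  set σ : P →₀ R := s p with hσdef
  have hσ : ∀ i : P, c * σ i = 0 := by
    intro i
    have h0 : c • σ = 0 := by rw [hσdef, ← map_smul, hp, map_zero]
    have := congrArg (fun g : P →₀ R => g i) h0
    simpa using this
  classical
  set D : R → R := fun g => if g = 0 then 0 else if hx : ∃ h : R, g = c * h then hx.choose else 0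
    with hD
  have hD0 : D 0 = 0 := by simp [hD]
  set τ : P →₀ R := σ.mapRange D hD0 with hτ
  have hcτ : c • τ = σ := by
    ext i
    rw [Finsupp.smul_apply, hτ, Finsupp.mapRange_apply]
    by_cases h : σ i = 0
    · simp [hD, h]
    · have hx : ∃ h : R, σ i = c * h := hdiv _ (hσ i)
      simp only [hD, h, if_false, dif_pos hx, smul_eq_mul]
      exact hx.choose_spec.symm
  refine ⟨Finsupp.linearCombination R id τ, ?_⟩
  have : Finsupp.linearCombination R (id : P → P) σ = p := hs p
  rw [← this, ← hcτ, map_smul]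

theorem not_bad_of_projective (hdiv : ∀ g : R, c * g = 0 → ∃ h : R, g = c * h) {P : Type u} [AddCommGroup P] [Module R P]
    (hP : Module.Projective R P) : ¬ IsBadMod c P := by
  rintro ⟨v, hv0, hv⟩
  obtain ⟨q, hq⟩ := proj_div hdiv hP v hv0
  exact hv q hq.symm

theorem bad_ker (hdiv : ∀ g : R, c * g = 0 → ∃ h : R, g = c * h) (hc2 : c * c = 0) {P N : Type u} [AddCommGroup P] [Module R P]
    [AddCommGroup N] [Module R N] (hP : Module.Projective R P)
    (f : P →ₗ[R] N) (hf : Function.Surjective f) (hN : IsBadMod c N) :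
    IsBadMod c (LinearMap.ker f) := by
  obtain ⟨v, hv0, hv⟩ := hN
  obtain ⟨p, hp⟩ := hf v
  have hcp : c • p ∈ LinearMap.ker f := by
    rw [LinearMap.mem_ker, map_smul, hp, hv0]
  refine ⟨⟨c • p, hcp⟩, ?_, ?_⟩
  · ext
    show c • (c • p) = (0 : P)
    rw [smul_smul, hc2, zero_smul]
  · rintro ⟨u, hu⟩ h
    have h' : c • (p - u) = 0 := by
      have := congrArg (Subtype.val) h
      simp only [SetLike.val_smul] at this
      rw [smul_sub, this, sub_self]
    obtain ⟨q, hq⟩ := proj_div hdiv hP _ h'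
    apply hv (f q)
    have : p = u + c • q := by rw [← hq]; abel
    rw [← hp, this, map_add, LinearMap.mem_ker.mp hu, map_smul, zero_add]

theorem bad_congr {N N' : Type u} [AddCommGroup N] [Module R N]
    [AddCommGroup N'] [Module R N'] (e : N ≃ₗ[R] N') (h : IsBadMod c N) : IsBadMod c N' := by
  obtain ⟨v, hv0, hv⟩ := h
  refine ⟨e v, by rw [← map_smul, hv0, map_zero], fun w hw => ?_⟩
  apply hv (e.symm w)
  have := congrArg e.symm hw
  rwa [map_smul, e.symm_apply_apply] at this

theorem bad_not_projDimLE (hdiv : ∀ g : R, c * g = 0 → ∃ h : R, g = c * h) (hc2 : c * c = 0) :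
    ∀ n : ℕ, ∀ N : ModuleCat.{u} R, IsBadMod c N → ¬ projDimLE n N := by
  intro n
  induction n with
  | zero =>
    intro N hN h
    have h' : Projective (ModuleCat.of R N) := h
    exact not_bad_of_projective hdiv ((IsProjective.iff_projective.{u, u} N).mpr h') hN
  | succ n ih =>
    rintro N hN ⟨P, f, hP, hepi, hker⟩
    have hfs : Function.Surjective f.hom := (ModuleCat.epi_iff_surjective f).mp hepi
    have hPmod : Module.Projective R P :=
      (IsProjective.iff_projective.{u, u} P).mpr (show Projective (ModuleCat.of R P) from hP)
    have hbk : IsBadMod c (LinearMap.ker f.hom) := bad_ker hdiv hc2 hPmod f.hom hfs hN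
    have e : (ModuleCat.of R (LinearMap.ker f.hom) : Type u) ≃ₗ[R] (Limits.kernel f : ModuleCat R) :=
      (ModuleCat.kernelIsoKer f).symm.toLinearEquiv
    exact ih (Limits.kernel f) (bad_congr e hbk) hker

end AuxBad

variable {k A : Type u} [Field k] [Ring A] [Algebra k A] [FiniteDimensional k A]

theorem endomorphism_ring_of_P2_and_infinite_projdim
    (e₁ e₂ a b : A)
    (hsum : e₁ + e₂ = 1) (h12 : e₁ * e₂ = 0) (h21 : e₂ * e₁ = 0)
    (he₁ : e₁ * e₁ = e₁) (he₂ : e₂ * e₂ = e₂)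
    (ha : e₂ * a * e₁ = a) (hb : e₁ * b * e₂ = b)
    (hrel : a * b * a = 0)
    (B : Module.Basis (Fin 7) k A) (hB : ⇑B = ![e₁, e₂, a, b, b * a, a * b, b * a * b])
    -- `T₁` is (a module isomorphic to) the indecomposable projective `P₂ = e₂A` :
    (T₁ : Type u) [AddCommGroup T₁] [Module Aᵐᵒᵖ T₁]
    (hT₁ : Nonempty (T₁ ≃ₗ[Aᵐᵒᵖ] ↥(Submodule.span Aᵐᵒᵖ ({e₂} : Set A)))) :
    -- `C = End_A(T₁)` is isomorphic to `k[x]/(x²)` :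
    Nonempty ((Polynomial k ⧸ Ideal.span {(Polynomial.X : Polynomial k) ^ 2}) ≃+*
        Module.End Aᵐᵒᵖ T₁) ∧
    -- `T₁` as a left `C`-module decomposes as `C ⊕ k` with `k` the simple `C`-module,
    -- which has infinite projective dimension over `C` :
    (∃ I : Ideal (Module.End Aᵐᵒᵖ T₁),
      IsSimpleModule (Module.End Aᵐᵒᵖ T₁) ((Module.End Aᵐᵒᵖ T₁) ⧸ I) ∧
      Nonempty (T₁ ≃ₗ[Module.End Aᵐᵒᵖ T₁]
        ((Module.End Aᵐᵒᵖ T₁) × ((Module.End Aᵐᵒᵖ T₁) ⧸ I))) ∧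
      (∀ n : ℕ, ¬ projDimLE n
        (ModuleCat.of (Module.End Aᵐᵒᵖ T₁) ((Module.End Aᵐᵒᵖ T₁) ⧸ I)))) ∧
    -- in particular `T₁` has infinite projective dimension as a left `C`-module :
    (∀ n : ℕ, ¬ projDimLE n (ModuleCat.of (Module.End Aᵐᵒᵖ T₁) T₁)) := by
  obtain ⟨eS⟩ := hT₁
  set M : Submodule Aᵐᵒᵖ A := Submodule.span Aᵐᵒᵖ ({e₂} : Set A) with hM
  -- multiplication facts
  have hbe₂ : b * e₂ = b := by
    conv_lhs => rw [← hb]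
    rw [mul_assoc, he₂, hb]
  have he₂a : e₂ * a = a := by
    conv_lhs => rw [← ha]
    rw [← mul_assoc, ← mul_assoc, he₂, ha]
  have he₂b : e₂ * b = 0 := by
    conv_lhs => rw [← hb]
    rw [← mul_assoc, ← mul_assoc, h21, zero_mul, zero_mul]
  have hae₂ : a * e₂ = 0 := by
    conv_lhs => rw [← ha]
    rw [mul_assoc, h12, mul_zero]
  have haba : (a * b) * a = 0 := hrel
  have habab : (a * b) * (a * b) = 0 := by
    rw [← mul_assoc, haba, zero_mul]
  have he₂ab : e₂ * (a * b) = a * b := by rw [← mul_assoc, he₂a]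
  have habe₂ : (a * b) * e₂ = a * b := by rw [mul_assoc, hbe₂]
  have he₂ba : e₂ * (b * a) = 0 := by rw [← mul_assoc, he₂b, zero_mul]
  have he₂bab : e₂ * (b * a * b) = 0 := by
    rw [← mul_assoc, ← mul_assoc, he₂b, zero_mul, zero_mul]
  -- linear independence
  have hli : LinearIndependent k ![e₁, e₂, a, b, b * a, a * b, b * a * b] := by
    rw [← hB]; exact B.linearIndependent
  have hBv0 : B 0 = e₁ := by rw [hB]; rfl
  have hBv1 : B 1 = e₂ := by rw [hB]; rfl
  have hBv2 : B 2 = a := by rw [hB]; rfl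
  have hBv3 : B 3 = b := by rw [hB]; rfl
  have hBv4 : B 4 = b * a := by rw [hB]; rfl
  have hBv5 : B 5 = a * b := by rw [hB]; rfl
  have hBv6 : B 6 = b * a * b := by rw [hB]; rfl
  have hcomb : ∀ α β γ : k, α • e₂ + β • a + γ • (a * b) = 0 → α = 0 ∧ β = 0 ∧ γ = 0 := by
    intro α β γ h
    have h7 := Fintype.linearIndependent_iff.mp hli ![0, α, β, 0, 0, γ, 0] ?_
    · exact ⟨h7 1, h7 2, h7 5⟩
    · rw [Fin.sum_univ_seven]
      show (0 : k) • e₁ + α • e₂ + β • a + (0 : k) • b + (0 : k) • (b * a) + γ • (a * b)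
          + (0 : k) • (b * a * b) = 0
      simpa using h
  -- membership and fixing
  have hmem : ∀ v : A, e₂ * v = v → v ∈ M := by
    intro v hv
    rw [hM, Submodule.mem_span_singleton]
    exact ⟨MulOpposite.op v, by rw [MulOpposite.smul_eq_mul_unop, MulOpposite.unop_op]; exact hv⟩
  have hfix : ∀ x ∈ M, e₂ * x = x := by
    intro x hx
    rw [hM, Submodule.mem_span_singleton] at hx
    obtain ⟨r, rfl⟩ := hx
    rw [MulOpposite.smul_eq_mul_unop, ← mul_assoc, he₂]
  -- representation of elements of M
  have hrep : ∀ m : M, ∃ α β γ : k, (m : A) = α • e₂ + β • a + γ • (a * b) := by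
    rintro ⟨x, hx⟩
    rw [hM, Submodule.mem_span_singleton] at hx
    obtain ⟨r, rfl⟩ := hx
    refine ⟨B.repr r.unop 1, B.repr r.unop 2, B.repr r.unop 5, ?_⟩
    show r • e₂ = _
    rw [MulOpposite.smul_eq_mul_unop]
    conv_lhs => rw [← B.sum_repr r.unop]
    rw [Finset.mul_sum, Fin.sum_univ_seven]
    simp only [mul_smul_comm]
    rw [hBv0, hBv1, hBv2, hBv3, hBv4, hBv5, hBv6, h21, he₂, he₂a, he₂b, he₂ba, he₂ab, he₂bab]
    simp only [smul_zero, add_zero, zero_add]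
  -- the left-multiplication endomorphisms of M
  have memL : ∀ (v : A) (m : M), e₂ * (v * (m : A)) ∈ M := by
    intro v m
    exact hmem _ (by rw [← mul_assoc, he₂])
  set Lmul : A → Module.End Aᵐᵒᵖ M := fun v =>
    { toFun := fun m => ⟨e₂ * (v * (m : A)), memL v m⟩
      map_add' := by
        intro m m'
        ext
        show e₂ * (v * ((m : A) + (m' : A))) = e₂ * (v * (m : A)) + e₂ * (v * (m' : A))
        rw [mul_add, mul_add]
      map_smul' := by
        intro r m
        ext
        show e₂ * (v * ((m : A) * r.unop)) = (e₂ * (v * (m : A))) * r.unop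
        simp only [mul_assoc] } with hLmul
  have hLapp : ∀ (v : A) (m : M), ((Lmul v m : M) : A) = e₂ * (v * (m : A)) := fun _ _ => rfl
  have hLadd : ∀ v w : A, Lmul (v + w) = Lmul v + Lmul w := by
    intro v w
    ext m
    show e₂ * ((v + w) * (m : A)) = e₂ * (v * (m : A)) + e₂ * (w * (m : A))
    rw [add_mul, mul_add]
  have hLzero : Lmul 0 = 0 := by
    ext m
    show e₂ * (0 * (m : A)) = 0
    rw [zero_mul, mul_zero]
  have hLcomp : ∀ v w : A, v * e₂ = v → Lmul v * Lmul w = Lmul (v * w) := by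
    intro v w hv
    ext m
    show e₂ * (v * (e₂ * (w * (m : A)))) = e₂ * ((v * w) * (m : A))
    rw [← mul_assoc v e₂, hv]
    simp only [mul_assoc]
  have hLone : Lmul e₂ = 1 := by
    ext m
    show e₂ * (e₂ * (m : A)) = (m : A)
    rw [hfix _ m.2, hfix _ m.2]
  set gen : M := ⟨e₂, hmem e₂ he₂⟩ with hgen
  have hgenM : ∀ m : M, ∃ r : Aᵐᵒᵖ, m = r • gen := by
    rintro ⟨x, hx⟩
    rw [hM, Submodule.mem_span_singleton] at hx
    obtain ⟨r, rfl⟩ := hx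
    exact ⟨r, rfl⟩
  -- classification of endomorphisms of M
  have hclass : ∀ f : Module.End Aᵐᵒᵖ M, ∃ s t : k, f = Lmul (s • e₂ + t • (a * b)) := by
    intro f
    obtain ⟨α, β, γ, hv⟩ := hrep (f gen)
    have hgfix : MulOpposite.op e₂ • gen = gen := by
      ext
      show e₂ * e₂ = e₂
      exact he₂
    have hve₂ : ((f gen : M) : A) * e₂ = ((f gen : M) : A) := by
      have h' : MulOpposite.op e₂ • f gen = f gen := by
        rw [← map_smul, hgfix]
      conv_rhs => rw [← h']
      rfl
    have hβ : β = 0 := by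
      rw [hv] at hve₂
      have heval : (α • e₂ + β • a + γ • (a * b)) * e₂ = α • e₂ + γ • (a * b) := by
        rw [add_mul, add_mul, smul_mul_assoc, smul_mul_assoc, smul_mul_assoc,
          he₂, hae₂, habe₂, smul_zero, add_zero]
      rw [heval] at hve₂
      have hc : (0 : k) • e₂ + β • a + (0 : k) • (a * b) = 0 := by
        have := sub_eq_zero.mpr hve₂
        rw [add_sub_assoc] at this
        simpa using this
      exact (hcomb 0 β 0 hc).2.1
    have h1 : ((f gen : M) : A) = α • e₂ + γ • (a * b) := by
      rw [hv, hβ, zero_smul, add_zero]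
    refine ⟨α, γ, ?_⟩
    have hcompute : e₂ * ((α • e₂ + γ • (a * b)) * e₂) = α • e₂ + γ • (a * b) := by
      rw [add_mul, smul_mul_assoc, smul_mul_assoc, he₂, habe₂, mul_add, mul_smul_comm,
        mul_smul_comm, he₂, he₂ab]
    have hgeq : f gen = Lmul (α • e₂ + γ • (a * b)) gen := by
      ext
      rw [hLapp]
      show ((f gen : M) : A) = e₂ * ((α • e₂ + γ • (a * b)) * e₂)
      rw [hcompute, h1]
    ext m
    obtain ⟨r, rfl⟩ := hgenM m
    rw [map_smul, map_smul, hgeq]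
  -- transporting to End of T₁
  set Θ : Module.End Aᵐᵒᵖ M ≃+* Module.End Aᵐᵒᵖ T₁ :=
    { toFun := fun g => (eS.symm.toLinearMap.comp g).comp eS.toLinearMap
      invFun := fun f => (eS.toLinearMap.comp f).comp eS.symm.toLinearMap
      left_inv := by
        intro g
        ext m
        simp
      right_inv := by
        intro f
        ext v
        simp
      map_add' := by
        intro g g'
        ext v
        simp
      map_mul' := by
        intro g g'
        ext v
        simp [Module.End.mul_apply] } with hΘ
  have hΘapp : ∀ (g : Module.End Aᵐᵒᵖ M) (v : T₁), Θ g v = eS.symm (g (eS v)) := fun _ _ => rfl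
  set c : Module.End Aᵐᵒᵖ T₁ := Θ (Lmul (a * b)) with hc
  set ν : k → Module.End Aᵐᵒᵖ T₁ := fun s => Θ (Lmul (s • e₂)) with hν
  have hse₂ : ∀ s : k, (s • e₂) * e₂ = s • e₂ := by
    intro s; rw [smul_mul_assoc, he₂]
  have hν0 : ν 0 = 0 := by rw [hν]; simp only [zero_smul]; rw [hLzero, map_zero]
  have hν1 : ν 1 = 1 := by rw [hν]; simp only [one_smul]; rw [hLone, map_one]
  have hνadd : ∀ s t : k, ν (s + t) = ν s + ν t := by
    intro s t
    rw [hν]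
    simp only [add_smul]
    rw [hLadd]
    exact map_add Θ _ _
  have hνmul : ∀ s t : k, ν (s * t) = ν s * ν t := by
    intro s t
    show Θ _ = Θ _ * Θ _
    rw [← map_mul Θ, hLcomp _ _ (hse₂ s)]
    congr 2
    rw [smul_mul_assoc, mul_smul_comm, he₂, smul_smul]
  have hνc : ∀ s : k, ν s * c = Θ (Lmul (s • (a * b))) := by
    intro s
    rw [hν, hc, ← map_mul Θ, hLcomp _ _ (hse₂ s)]
    congr 2
    rw [smul_mul_assoc, he₂ab]
  have hcc : c * c = 0 := by
    rw [hc, ← map_mul Θ, hLcomp _ _ habe₂, habab, hLzero, map_zero]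
  have hcν : ∀ s : k, c * ν s = ν s * c := by
    intro s
    rw [hνc, hc, hν, ← map_mul Θ, hLcomp _ _ habe₂]
    congr 2
    rw [mul_smul_comm, habe₂]
  have hErep : ∀ f : Module.End Aᵐᵒᵖ T₁, ∃ s t : k, f = ν s + ν t * c := by
    intro f
    obtain ⟨s, t, hst⟩ := hclass (Θ.symm f)
    refine ⟨s, t, ?_⟩
    have h' := congrArg Θ hst
    rw [Θ.apply_symm_apply] at h'
    rw [h', hνc, hν, ← map_add Θ, ← hLadd]
  -- evaluating a combination at the generator
  have hLsab : ∀ s t : k, Lmul (s • e₂ + t • (a * b)) gen = ⟨s • e₂ + t • (a * b),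
      hmem _ (by rw [mul_add, mul_smul_comm, mul_smul_comm, he₂, he₂ab])⟩ := by
    intro s t
    ext
    rw [hLapp]
    show e₂ * ((s • e₂ + t • (a * b)) * e₂) = s • e₂ + t • (a * b)
    rw [add_mul, smul_mul_assoc, smul_mul_assoc, he₂, habe₂, mul_add, mul_smul_comm,
      mul_smul_comm, he₂, he₂ab]
  have hLuniq : ∀ s t : k, Lmul (s • e₂ + t • (a * b)) = 0 → s = 0 ∧ t = 0 := by
    intro s t h
    have h1 : ((Lmul (s • e₂ + t • (a * b)) gen : M) : A)
        = (((0 : Module.End Aᵐᵒᵖ M) gen : M) : A) := by rw [h]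
    rw [hLsab s t] at h1
    have h0 : s • e₂ + t • (a * b) = 0 := h1
    have hc0 : s • e₂ + (0 : k) • a + t • (a * b) = 0 := by
      rw [zero_smul, add_zero]
      exact h0
    obtain ⟨h1, _, h3⟩ := hcomb _ _ _ hc0
    exact ⟨h1, h3⟩
  have hEuniq : ∀ s t : k, ν s + ν t * c = 0 → s = 0 ∧ t = 0 := by
    intro s t h
    rw [hνc, hν, ← map_add Θ, ← hLadd] at h
    have h' : Lmul (s • e₂ + t • (a * b)) = 0 := by
      have := congrArg Θ.symm h
      rwa [Θ.symm_apply_apply, map_zero] at this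
    exact hLuniq s t h'
  have hcentral : ∀ g : Module.End Aᵐᵒᵖ T₁, c * g = g * c := by
    intro g
    obtain ⟨s, t, rfl⟩ := hErep g
    rw [mul_add, add_mul, hcν, ← mul_assoc, hcν]
  have hdivE : ∀ g : Module.End Aᵐᵒᵖ T₁, c * g = 0 → ∃ h, g = c * h := by
    intro g hg
    obtain ⟨s, t, rfl⟩ := hErep g
    rw [mul_add, ← mul_assoc, hcν, hcν, mul_assoc, hcc, mul_zero, add_zero, hνc] at hg
    have hs : s = 0 := by
      have h' : Lmul (s • (a * b)) = 0 := by
        have := congrArg Θ.symm hg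
        rwa [Θ.symm_apply_apply, map_zero] at this
      have h'' : Lmul ((0 : k) • e₂ + s • (a * b)) = 0 := by
        rw [zero_smul, zero_add]
        exact h'
      exact (hLuniq 0 s h'').2
    refine ⟨ν t, ?_⟩
    rw [hs, hν0, zero_add, hcν]
  -- the ring hom from k[X]
  set νR : k →+* Module.End Aᵐᵒᵖ T₁ :=
    { toFun := ν
      map_one' := hν1
      map_mul' := hνmul
      map_zero' := hν0
      map_add' := hνadd } with hνR
  set ψ : Polynomial k →+* Module.End Aᵐᵒᵖ T₁ :=
    Polynomial.eval₂RingHom' νR c (fun s => (show Commute c (νR s) from hcν s).symm) with hψ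
  have hψX : ψ Polynomial.X = c := by
    rw [hψ, Polynomial.eval₂RingHom'_apply, Polynomial.eval₂_X]
  have hψC : ∀ s : k, ψ (Polynomial.C s) = ν s := by
    intro s
    rw [hψ, Polynomial.eval₂RingHom'_apply, Polynomial.eval₂_C]
    rfl
  have hψX2 : ψ (Polynomial.X ^ 2) = 0 := by
    rw [map_pow, hψX, sq, hcc]
  -- descend to k[X]/(X²)
  have hker : ∀ p ∈ Ideal.span {(Polynomial.X : Polynomial k) ^ 2}, ψ p = 0 := by
    intro p hp
    rw [Ideal.mem_span_singleton] at hp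
    obtain ⟨q, rfl⟩ := hp
    rw [map_mul, hψX2, zero_mul]
  set ρ : (Polynomial k ⧸ Ideal.span {(Polynomial.X : Polynomial k) ^ 2}) →+*
      Module.End Aᵐᵒᵖ T₁ := Ideal.Quotient.lift _ ψ hker with hρ
  have hρmk : ∀ p : Polynomial k, ρ (Ideal.Quotient.mk _ p) = ψ p := fun p =>
    Ideal.Quotient.lift_mk _ _ _
  have hmonic : (Polynomial.X ^ 2 : Polynomial k).Monic := Polynomial.monic_X_pow 2
  have hmodrep : ∀ q : Polynomial k ⧸ Ideal.span {(Polynomial.X : Polynomial k) ^ 2},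
      ∃ s t : k, q = Ideal.Quotient.mk _ (Polynomial.C s + Polynomial.C t * Polynomial.X) := by
    intro q
    obtain ⟨p, rfl⟩ := Ideal.Quotient.mk_surjective q
    set r := p %ₘ (Polynomial.X ^ 2) with hr
    have hdeg : r.degree < 2 := by
      have := Polynomial.degree_modByMonic_lt p hmonic
      rwa [Polynomial.degree_X_pow] at this
    have hdeg1 : r.degree ≤ 1 := by
      rw [Polynomial.degree_le_iff_coeff_zero]
      intro m hm
      refine (Polynomial.degree_lt_iff_coeff_zero r 2).mp hdeg m ?_
      have hm' : 1 < m := by exact_mod_cast hm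
      omega
    refine ⟨r.coeff 0, r.coeff 1, ?_⟩
    have hsplit : r + Polynomial.X ^ 2 * (p /ₘ (Polynomial.X ^ 2)) = p :=
      Polynomial.modByMonic_add_div p _
    have hmkeq : Ideal.Quotient.mk (Ideal.span {(Polynomial.X : Polynomial k) ^ 2}) p
        = Ideal.Quotient.mk _ r := by
      rw [← hsplit, map_add, map_mul]
      have hz : Ideal.Quotient.mk (Ideal.span {(Polynomial.X : Polynomial k) ^ 2})
          (Polynomial.X ^ 2) = 0 :=
        Ideal.Quotient.eq_zero_iff_mem.mpr (Ideal.subset_span (Set.mem_singleton _))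
      rw [hz, zero_mul, add_zero]
    rw [hmkeq]
    congr 1
    have hXC := Polynomial.eq_X_add_C_of_degree_le_one hdeg1
    conv_lhs => rw [hXC]
    ring
  have hρsurj : Function.Surjective ρ := by
    intro f
    obtain ⟨s, t, rfl⟩ := hErep f
    refine ⟨Ideal.Quotient.mk _ (Polynomial.C s + Polynomial.C t * Polynomial.X), ?_⟩
    rw [hρmk, map_add, map_mul, hψC, hψC, hψX]
  have hρinj : Function.Injective ρ := by
    rw [injective_iff_map_eq_zero]
    intro q hq
    obtain ⟨s, t, rfl⟩ := hmodrep q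
    rw [hρmk, map_add, map_mul, hψC, hψC, hψX] at hq
    obtain ⟨hs, ht⟩ := hEuniq s t hq
    rw [hs, ht]
    simp
  -- the ideal I = (c)
  set I : Ideal (Module.End Aᵐᵒᵖ T₁) := Ideal.span {c} with hI
  have hcI : c ∈ I := Ideal.subset_span (Set.mem_singleton _)
  have hImem : ∀ x : (Module.End Aᵐᵒᵖ T₁), x ∈ I ↔ ∃ s : k, x = ν s * c := by
    intro x
    constructor
    · intro hx
      rw [hI] at hx
      rw [Ideal.span, Submodule.mem_span_singleton] at hx
      obtain ⟨r, hr⟩ := hx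
      obtain ⟨s, t, rfl⟩ := hErep r
      refine ⟨s, ?_⟩
      rw [← hr, smul_eq_mul, add_mul, mul_assoc, hcc, mul_zero, add_zero]
    · rintro ⟨s, rfl⟩
      exact Ideal.mul_mem_left I _ hcI
  have hform : ∀ s t : k, ν s + ν t * c = Θ (Lmul (s • e₂ + t • (a * b))) := by
    intro s t
    rw [hνc, hν, ← map_add Θ, ← hLadd]
  have h1I : (1 : (Module.End Aᵐᵒᵖ T₁)) ∉ I := by
    intro h
    obtain ⟨s, hs⟩ := (hImem 1).mp h
    have h1 : ν 0 + ν s * c = 1 := by rw [hν0, zero_add, ← hs]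
    rw [hform] at h1
    have h2 : Lmul ((0 : k) • e₂ + s • (a * b)) = 1 := by
      have := congrArg Θ.symm h1
      rwa [Θ.symm_apply_apply, map_one] at this
    have h3 : ((Lmul ((0 : k) • e₂ + s • (a * b)) gen : M) : A) = e₂ := by
      rw [h2]; rfl
    rw [hLsab 0 s] at h3
    have h4 : (0 : k) • e₂ + s • (a * b) = e₂ := h3
    have h5 : (-1 : k) • e₂ + (0 : k) • a + s • (a * b) = 0 := by
      rw [zero_smul, add_zero, neg_smul, one_smul]
      rw [zero_smul, zero_add] at h4
      rw [h4]
      abel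
    have := (hcomb _ _ _ h5).1
    simp at this
  have hcoatom : IsCoatom I := by
    constructor
    · intro h
      exact h1I (h.symm ▸ Submodule.mem_top)
    · intro J hJ
      obtain ⟨f, hfJ, hfI⟩ := SetLike.exists_of_lt hJ
      obtain ⟨s, t, rfl⟩ := hErep f
      have hs : s ≠ 0 := by
        intro h0
        exact hfI ((hImem _).mpr ⟨t, by rw [h0, hν0, zero_add]⟩)
      have hνsJ : ν s ∈ J := by
        have h1 : ν t * c ∈ J := hJ.le ((hImem _).mpr ⟨t, rfl⟩)
        have := J.sub_mem hfJ h1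
        simpa using this
      have hone : (1 : (Module.End Aᵐᵒᵖ T₁)) ∈ J := by
        have := J.mul_mem_left (ν s⁻¹) hνsJ
        rwa [← hνmul, inv_mul_cancel₀ hs, hν1] at this
      exact Ideal.eq_top_iff_one J |>.mpr hone
  have hsimple : IsSimpleModule (Module.End Aᵐᵒᵖ T₁) ((Module.End Aᵐᵒᵖ T₁) ⧸ I) := isSimpleModule_iff_isCoatom.mpr hcoatom
  -- the decomposition T₁ ≃ (Module.End Aᵐᵒᵖ T₁) × (Module.End Aᵐᵒᵖ T₁)/I
  have hmema : a ∈ M := hmem a he₂a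
  set t0 : T₁ := eS.symm gen with ht0
  set t1 : T₁ := eS.symm ⟨a, hmema⟩ with ht1
  have hsmulapp : ∀ (f : (Module.End Aᵐᵒᵖ T₁)) (v : T₁), f • v = f v := fun _ _ => rfl
  have hct1 : c • t1 = 0 := by
    rw [hsmulapp, hc, hΘapp, ht1, eS.apply_symm_apply]
    have : Lmul (a * b) ⟨a, hmema⟩ = 0 := by
      ext
      show e₂ * ((a * b) * a) = 0
      rw [haba, mul_zero]
    rw [this, map_zero]
  have hft0 : ∀ s t : k, (ν s + ν t * c) • t0 = eS.symm ⟨s • e₂ + t • (a * b),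
      hmem _ (by rw [mul_add, mul_smul_comm, mul_smul_comm, he₂, he₂ab])⟩ := by
    intro s t
    rw [hsmulapp, hform, hΘapp, ht0, eS.apply_symm_apply, hLsab]
  have hνt1 : ∀ s : k, ν s • t1 = eS.symm ⟨s • a, hmem _ (by rw [mul_smul_comm, he₂a])⟩ := by
    intro s
    rw [hsmulapp, hν, hΘapp, ht1, eS.apply_symm_apply]
    congr 1
    ext
    show e₂ * ((s • e₂) * a) = s • a
    rw [smul_mul_assoc, he₂a, mul_smul_comm, he₂a]
  set φ₁ : (Module.End Aᵐᵒᵖ T₁) →ₗ[(Module.End Aᵐᵒᵖ T₁)] T₁ :=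
    { toFun := fun f => f • t0
      map_add' := fun f g => add_smul f g t0
      map_smul' := by
        intro r f
        show (r • f) • t0 = r • (f • t0)
        rw [smul_eq_mul, mul_smul] } with hφ₁
  set φ₂l : (Module.End Aᵐᵒᵖ T₁) →ₗ[(Module.End Aᵐᵒᵖ T₁)] T₁ :=
    { toFun := fun f => f • t1
      map_add' := fun f g => add_smul f g t1
      map_smul' := by
        intro r f
        show (r • f) • t1 = r • (f • t1)
        rw [smul_eq_mul, mul_smul] } with hφ₂l
  have hIker : I ≤ LinearMap.ker φ₂l := by
    rw [hI, Ideal.span, Submodule.span_le, Set.singleton_subset_iff]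
    show c • t1 = 0
    exact hct1
  set φ₂ : ((Module.End Aᵐᵒᵖ T₁) ⧸ I) →ₗ[(Module.End Aᵐᵒᵖ T₁)] T₁ := Submodule.liftQ I φ₂l hIker with hφ₂
  set Φ : (Module.End Aᵐᵒᵖ T₁) × ((Module.End Aᵐᵒᵖ T₁) ⧸ I) →ₗ[(Module.End Aᵐᵒᵖ T₁)] T₁ := φ₁.coprod φ₂ with hΦ
  have hΦapp : ∀ (f : (Module.End Aᵐᵒᵖ T₁)) (g : (Module.End Aᵐᵒᵖ T₁)), Φ (f, Submodule.Quotient.mk g) = f • t0 + g • t1 := by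
    intro f g
    rw [hΦ, LinearMap.coprod_apply, hφ₂, Submodule.liftQ_apply]
    rfl
  have hΦsurj : Function.Surjective Φ := by
    intro v
    obtain ⟨α, β, γ, hv⟩ := hrep (eS v)
    refine ⟨(ν α + ν γ * c, Submodule.Quotient.mk (ν β)), ?_⟩
    apply eS.injective
    rw [hΦapp, map_add, hft0, hνt1, eS.apply_symm_apply, eS.apply_symm_apply]
    ext
    show (α • e₂ + γ • (a * b)) + β • a = ((eS v : M) : A)
    rw [hv]
    abel
  have hΦinj : Function.Injective Φ := by
    rw [← LinearMap.ker_eq_bot]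
    rw [LinearMap.ker_eq_bot']
    rintro ⟨f, q⟩ hx
    obtain ⟨s, t, rfl⟩ := hErep f
    obtain ⟨g, rfl⟩ := Submodule.Quotient.mk_surjective I q
    obtain ⟨β, δ, hg⟩ := hErep g
    have hq : (Submodule.Quotient.mk g : (Module.End Aᵐᵒᵖ T₁) ⧸ I) = Submodule.Quotient.mk (ν β) := by
      rw [hg]
      have : Submodule.Quotient.mk (p := I) (ν β + ν δ * c)
          = Submodule.Quotient.mk (ν β) + Submodule.Quotient.mk (ν δ * c) := rfl
      rw [this, (Submodule.Quotient.mk_eq_zero I).mpr ((hImem _).mpr ⟨δ, rfl⟩), add_zero]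
    rw [hq, hΦapp, hft0, hνt1] at hx
    have h5 := congrArg (fun w : T₁ => ((eS w : M) : A)) hx
    simp only [map_add, LinearEquiv.apply_symm_apply, map_zero, Submodule.coe_add,
      Submodule.coe_zero] at h5
    have hcoe : s • e₂ + β • a + t • (a * b) = 0 := by
      rw [← h5]
      abel
    obtain ⟨h1, h2, h3⟩ := hcomb _ _ _ hcoe
    have hf0 : ν s + ν t * c = 0 := by
      rw [h1, h3, hν0, zero_mul, add_zero]
    have hq0 : (Submodule.Quotient.mk g : (Module.End Aᵐᵒᵖ T₁) ⧸ I) = 0 := by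
      rw [hq, h2, hν0]
      rfl
    rw [hf0, hq0]
    rfl
  have hTeq : T₁ ≃ₗ[(Module.End Aᵐᵒᵖ T₁)] (Module.End Aᵐᵒᵖ T₁) × ((Module.End Aᵐᵒᵖ T₁) ⧸ I) := (LinearEquiv.ofBijective Φ ⟨hΦinj, hΦsurj⟩).symm
  -- badness
  have hbadQ : IsBadMod c ((Module.End Aᵐᵒᵖ T₁) ⧸ I) := by
    refine ⟨Submodule.Quotient.mk 1, ?_, ?_⟩
    · rw [← Submodule.Quotient.mk_smul, smul_eq_mul, mul_one]
      exact (Submodule.Quotient.mk_eq_zero I).mpr hcI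
    · intro w hw
      obtain ⟨g, rfl⟩ := Submodule.Quotient.mk_surjective I w
      rw [← Submodule.Quotient.mk_smul, smul_eq_mul] at hw
      have h2 : (c * g) ∈ I := by
        rw [hcentral g]
        exact Ideal.mul_mem_left I g hcI
      rw [(Submodule.Quotient.mk_eq_zero I).mpr h2] at hw
      exact h1I ((Submodule.Quotient.mk_eq_zero I).mp hw.symm)
  have hbadT : IsBadMod c T₁ := by
    refine ⟨t1, hct1, ?_⟩
    intro w hw
    obtain ⟨α, β, γ, hv⟩ := hrep (eS w)
    have h1 : c • w = eS.symm ⟨α • (a * b), hmem _ (by rw [mul_smul_comm, he₂ab])⟩ := by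
      rw [hsmulapp, hc, hΘapp]
      congr 1
      ext
      show e₂ * ((a * b) * ((eS w : M) : A)) = α • (a * b)
      rw [hv]
      simp only [mul_add, mul_smul_comm, habe₂, haba, habab, smul_zero, add_zero, he₂ab]
    rw [h1] at hw
    have h2 : α • (a * b) = a := by
      have h3 := congrArg (fun v : T₁ => ((eS v : M) : A)) hw
      simp only [LinearEquiv.apply_symm_apply, ht1] at h3
      exact h3
    have h3 : (0 : k) • e₂ + (-1 : k) • a + α • (a * b) = 0 := by
      rw [zero_smul, zero_add, neg_smul, one_smul, h2, neg_add_cancel]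
    have h4 := (hcomb _ _ _ h3).2.1
    norm_num at h4
  refine ⟨⟨RingEquiv.ofBijective ρ ⟨hρinj, hρsurj⟩⟩,
    ⟨I, hsimple, ⟨hTeq⟩, fun n => bad_not_projDimLE hdivE hcc n
      (ModuleCat.of (Module.End Aᵐᵒᵖ T₁) ((Module.End Aᵐᵒᵖ T₁) ⧸ I)) hbadQ⟩,
    fun n => bad_not_projDimLE hdivE hcc n (ModuleCat.of (Module.End Aᵐᵒᵖ T₁) T₁) hbadT⟩


end
end

section
/- Let A be the path algebra of the quiver with vertices 1, 2, arrows α: 1 → 2, β: 2 → 1, modulo the relation βα = 0, and let ℓ(A) be the direct sum of two copies of the module with top 2 and socle 1 (the quotient of P_2 by its socle). Then the endomorphism ring B = End_A(ℓ(A)) is isomorphic to the 2×2 matrix algebra M_2(k), and the natural ring homomorphism φ: A → B sending e_1 ↦ E_11, e_2 ↦ E_22, α ↦ E_21, β ↦ 0 is a ring epimorphism. -/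
open CategoryTheory

universe u

noncomputable section

section Aux

open Matrix

/-- Conjugation of endomorphism rings by a linear equivalence, as a ring equivalence. -/
def endConjAux {R M N : Type*} [Semiring R] [AddCommMonoid M] [AddCommMonoid N]
    [Module R M] [Module R N] (e : M ≃ₗ[R] N) :
    Module.End R M ≃+* Module.End R N where
  toFun f := e.toLinearMap ∘ₗ f ∘ₗ e.symm.toLinearMap
  invFun g := e.symm.toLinearMap ∘ₗ g ∘ₗ e.toLinearMap
  left_inv f := by ext x; simp
  right_inv g := by ext x; simp
  map_add' f g := by ext x; simp
  map_mul' f g := by ext x; simp [Module.End.mul_apply]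

/-- Two ring homs out of `M₂(k)` agreeing on all `E₀₀ c`, `E₁₁ c`, `E₁₀ c` agree. -/
lemma matrix_epi_aux {k : Type u} [Field k] (S : Type u) [Ring S]
    (g h : Matrix (Fin 2) (Fin 2) k →+* S)
    (h00 : ∀ c : k, g (single 0 0 c) = h (single 0 0 c))
    (h11 : ∀ c : k, g (single 1 1 c) = h (single 1 1 c))
    (h10 : ∀ c : k, g (single 1 0 c) = h (single 1 0 c)) :
    g = h := by
  set t : Matrix (Fin 2) (Fin 2) k := single 0 1 (1 : k) with ht_def
  have ht : g t = h t := by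
    have e1 : t * single 1 1 (1 : k) = t := by
      rw [ht_def, single_mul_single_same, mul_one]
    have e2 : (single 1 0 (1 : k)) * t = single 1 1 (1:k) := by
      rw [ht_def, single_mul_single_same, mul_one]
    have e3 : t * single 1 0 (1 : k) = single 0 0 (1:k) := by
      rw [ht_def, single_mul_single_same, one_mul]
    have e4 : (single 0 0 (1 : k)) * t = t := by
      rw [ht_def, single_mul_single_same, one_mul]
    calc g t = g t * g (single 1 1 (1:k)) := by rw [← _root_.map_mul, e1]
      _ = g t * h (single 1 1 (1:k)) := by rw [h11]
      _ = g t * (h (single 1 0 (1:k)) * h t) := by rw [← _root_.map_mul, e2]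
      _ = g t * (g (single 1 0 (1:k)) * h t) := by rw [h10]
      _ = (g t * g (single 1 0 (1:k))) * h t := by rw [mul_assoc]
      _ = g (single 0 0 (1:k)) * h t := by rw [← _root_.map_mul, e3]
      _ = h (single 0 0 (1:k)) * h t := by rw [h00]
      _ = h t := by rw [← _root_.map_mul, e4]
  have h01 : ∀ c : k, g (single 0 1 c) = h (single 0 1 c) := by
    intro c
    have : single 0 1 c = single 0 0 c * t := by
      rw [ht_def, single_mul_single_same, mul_one]
    rw [this, _root_.map_mul, _root_.map_mul, h00, ht]
  have hall : ∀ (i j : Fin 2) (c : k),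
      g (single i j c) = h (single i j c) := by
    intro i j c
    fin_cases i <;> fin_cases j
    · exact h00 c
    · exact h01 c
    · exact h10 c
    · exact h11 c
  ext M
  rw [matrix_eq_sum_single M, map_sum, map_sum]
  refine Finset.sum_congr rfl fun i _ => ?_
  rw [map_sum, map_sum]
  exact Finset.sum_congr rfl fun j _ => hall i j (M i j)

end Aux

variable {k A : Type u} [Field k] [Ring A] [Algebra k A] [FiniteDimensional k A]

set_option maxHeartbeats 2000000 in
theorem endomorphism_ring_of_ellA_is_matrix_algebra
    (e₁ e₂ a b : A)
    (hsum : e₁ + e₂ = 1) (h12 : e₁ * e₂ = 0) (h21 : e₂ * e₁ = 0)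
    (he₁ : e₁ * e₁ = e₁) (he₂ : e₂ * e₂ = e₂)
    (ha : e₂ * a * e₁ = a) (hb : e₁ * b * e₂ = b)
    (hrel : b * a = 0)
    (B : Module.Basis (Fin 5) k A) (hB : ⇑B = ![e₁, e₂, a, b, a * b])
    -- `V` is (a module isomorphic to) the quotient of `P₂ = e₂A` by its socle `(a*b)A` :
    (V : Type u) [AddCommGroup V] [Module Aᵐᵒᵖ V]
    (hV : Nonempty (V ≃ₗ[Aᵐᵒᵖ]
      (↥(Submodule.span Aᵐᵒᵖ ({e₂} : Set A)) ⧸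
        Submodule.comap (Submodule.span Aᵐᵒᵖ ({e₂} : Set A)).subtype
          (Submodule.span Aᵐᵒᵖ ({a * b} : Set A))))) :
    -- `B = End_A(V ⊕ V)` is isomorphic to the `2×2` matrix algebra `M₂(k)` :
    Nonempty (Matrix (Fin 2) (Fin 2) k ≃+* Module.End Aᵐᵒᵖ (V × V)) ∧
    -- the natural map `φ : A → M₂(k)`, `e₁ ↦ E₁₁`, `e₂ ↦ E₂₂`, `α ↦ E₂₁`, `β ↦ 0`,
    -- is a ring epimorphism :
    ∃ φ : A →+* Matrix (Fin 2) (Fin 2) k,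
      φ e₁ = Matrix.single 0 0 (1 : k) ∧
      φ e₂ = Matrix.single 1 1 (1 : k) ∧
      φ a = Matrix.single 1 0 (1 : k) ∧
      φ b = 0 ∧
      (∀ (S : Type u) [Ring S] (g h : Matrix (Fin 2) (Fin 2) k →+* S),
        g.comp φ = h.comp φ → g = h) := by
  -- multiplication table
  have hea : e₂ * a = a := by
    conv_lhs => rw [← ha]
    rw [← mul_assoc, ← mul_assoc, he₂, ha]
  have hae₁ : a * e₁ = a := by
    conv_lhs => rw [← ha]
    rw [mul_assoc, he₁, ha]
  have hae : a * e₂ = 0 := by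
    conv_lhs => rw [← ha]
    rw [mul_assoc, h12, mul_zero]
  have he₁a : e₁ * a = 0 := by
    conv_lhs => rw [← ha]
    rw [← mul_assoc, ← mul_assoc, h12, zero_mul, zero_mul]
  have he₁b : e₁ * b = b := by
    conv_lhs => rw [← hb]
    rw [← mul_assoc, ← mul_assoc, he₁, hb]
  have hbe₂ : b * e₂ = b := by
    conv_lhs => rw [← hb]
    rw [mul_assoc, he₂, hb]
  have he₂b : e₂ * b = 0 := by
    conv_lhs => rw [← hb]
    rw [← mul_assoc, ← mul_assoc, h21, zero_mul, zero_mul]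
  have hbe₁ : b * e₁ = 0 := by
    conv_lhs => rw [← hb]
    rw [mul_assoc, h21, mul_zero]
  have haa : a * a = 0 := by
    nth_rewrite 2 [← hea]
    rw [← mul_assoc, hae, zero_mul]
  have hbb : b * b = 0 := by
    nth_rewrite 2 [← he₁b]
    rw [← mul_assoc, hbe₁, zero_mul]
  have he₂c : e₂ * (a * b) = a * b := by rw [← mul_assoc, hea]
  have hce₂ : (a * b) * e₂ = a * b := by rw [mul_assoc, hbe₂]
  have he₁c : e₁ * (a * b) = 0 := by rw [← mul_assoc, he₁a, zero_mul]
  have hce₁ : (a * b) * e₁ = 0 := by rw [mul_assoc, hbe₁, mul_zero]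
  have hac : a * (a * b) = 0 := by rw [← mul_assoc, haa, zero_mul]
  have hca : (a * b) * a = 0 := by rw [mul_assoc, hrel, mul_zero]
  have hbc : b * (a * b) = 0 := by rw [← mul_assoc, hrel, zero_mul]
  have hcb : (a * b) * b = 0 := by rw [mul_assoc, hbb, mul_zero]
  have hcc : (a * b) * (a * b) = 0 := by rw [mul_assoc, hbc, mul_zero]
  -- basis values
  have hB0 : B 0 = e₁ := by rw [hB]; rfl
  have hB1 : B 1 = e₂ := by rw [hB]; rfl
  have hB2 : B 2 = a := by rw [hB]; rfl
  have hB3 : B 3 = b := by rw [hB]; rfl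
  have hB4 : B 4 = a * b := by rw [hB]; rfl
  -- the linear map underlying φ
  set v : Fin 5 → Matrix (Fin 2) (Fin 2) k :=
    ![Matrix.single 0 0 (1:k), Matrix.single 1 1 (1:k),
      Matrix.single 1 0 (1:k), 0, 0] with hv
  set f : A →ₗ[k] Matrix (Fin 2) (Fin 2) k := B.constr k v with hf
  have hfe₁ : f e₁ = Matrix.single 0 0 (1:k) := by
    rw [← hB0, hf]; exact B.constr_basis k v 0
  have hfe₂ : f e₂ = Matrix.single 1 1 (1:k) := by
    rw [← hB1, hf]; exact B.constr_basis k v 1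
  have hfa : f a = Matrix.single 1 0 (1:k) := by
    rw [← hB2, hf]; exact B.constr_basis k v 2
  have hfb : f b = 0 := by
    rw [← hB3, hf]; exact B.constr_basis k v 3
  have hfc : f (a * b) = 0 := by
    rw [← hB4, hf]; exact B.constr_basis k v 4
  -- matrix unit products
  have m00_00 : (Matrix.single 0 0 1 : Matrix (Fin 2) (Fin 2) k) * Matrix.single 0 0 1 = Matrix.single 0 0 1 := by
    rw [Matrix.single_mul_single_same, one_mul]
  have m00_11 : (Matrix.single 0 0 1 : Matrix (Fin 2) (Fin 2) k) * Matrix.single 1 1 1 = 0 :=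
    Matrix.single_mul_single_of_ne _ _ _ _ (by decide) _
  have m00_10 : (Matrix.single 0 0 1 : Matrix (Fin 2) (Fin 2) k) * Matrix.single 1 0 1 = 0 :=
    Matrix.single_mul_single_of_ne _ _ _ _ (by decide) _
  have m11_00 : (Matrix.single 1 1 1 : Matrix (Fin 2) (Fin 2) k) * Matrix.single 0 0 1 = 0 :=
    Matrix.single_mul_single_of_ne _ _ _ _ (by decide) _
  have m11_11 : (Matrix.single 1 1 1 : Matrix (Fin 2) (Fin 2) k) * Matrix.single 1 1 1 = Matrix.single 1 1 1 := by
    rw [Matrix.single_mul_single_same, one_mul]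
  have m11_10 : (Matrix.single 1 1 1 : Matrix (Fin 2) (Fin 2) k) * Matrix.single 1 0 1 = Matrix.single 1 0 1 := by
    rw [Matrix.single_mul_single_same, one_mul]
  have m10_00 : (Matrix.single 1 0 1 : Matrix (Fin 2) (Fin 2) k) * Matrix.single 0 0 1 = Matrix.single 1 0 1 := by
    rw [Matrix.single_mul_single_same, one_mul]
  have m10_11 : (Matrix.single 1 0 1 : Matrix (Fin 2) (Fin 2) k) * Matrix.single 1 1 1 = 0 :=
    Matrix.single_mul_single_of_ne _ _ _ _ (by decide) _
  have m10_10 : (Matrix.single 1 0 1 : Matrix (Fin 2) (Fin 2) k) * Matrix.single 1 0 1 = 0 :=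
    Matrix.single_mul_single_of_ne _ _ _ _ (by decide) _
  -- multiplicativity
  have hmul : ∀ x y : A, f (x * y) = f x * f y := by
    rw [LinearMap.map_mul_iff]
    refine B.ext fun i => B.ext fun j => ?_
    simp only [LinearMap.compr₂_apply, LinearMap.mul_apply', LinearMap.compl₂_apply,
      LinearMap.comp_apply, hB]
    fin_cases i <;> fin_cases j <;>
      simp [Matrix.cons_val_zero, Matrix.cons_val_one, Matrix.head_cons,
        Matrix.cons_val_two, Matrix.tail_cons, Matrix.cons_val_three, Matrix.cons_val_four,
        he₁, he₂, h12, h21, hea, hae, hae₁, he₁a, he₁b, hbe₂, he₂b, hbe₁,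
        haa, hbb, hrel, he₂c, hce₂, he₁c, hce₁, hac, hca, hbc, hcb, hcc,
        hfe₁, hfe₂, hfa, hfb, hfc, map_zero,
        m00_00, m00_11, m00_10, m11_00, m11_11, m11_10, m10_00, m10_11, m10_10,
        mul_zero, zero_mul]
  have hone : f 1 = 1 := by
    rw [← hsum, map_add, hfe₁, hfe₂]
    ext i j
    fin_cases i <;> fin_cases j <;>
      simp [Matrix.single, Matrix.one_apply]
  set φ : A →+* Matrix (Fin 2) (Fin 2) k :=
    { toFun := f, map_one' := hone, map_mul' := hmul,
      map_zero' := f.map_zero, map_add' := f.map_add } with hφ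
  -- more right-multiplication expansions
  have key2 : ∀ y : A, e₂ * (y * e₂) = B.repr y 1 • e₂ + B.repr y 4 • (a * b) := by
    intro y
    conv_lhs => rw [← B.sum_repr y]
    rw [Finset.sum_mul, Finset.mul_sum, Fin.sum_univ_five]
    simp only [hB0, hB1, hB2, hB3, hB4, smul_mul_assoc, mul_smul_comm,
      h12, h21, he₁, he₂, hea, hae, hae₁, he₁a, he₁b, hbe₂, he₂b, hbe₁, he₂c, hce₂,
      mul_zero, zero_mul, smul_zero]
    abel
  have key3 : ∀ y : A, (a * b) * y = B.repr y 1 • (a * b) := by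
    intro y
    conv_lhs => rw [← B.sum_repr y]
    rw [Finset.mul_sum, Fin.sum_univ_five]
    simp only [hB0, hB1, hB2, hB3, hB4, mul_smul_comm,
      hce₁, hce₂, hca, hcb, hcc, mul_zero, zero_mul, smul_zero]
    abel
  constructor
  · -- Part 1 : `M₂(k) ≅ End(V × V)`
    obtain ⟨ε⟩ := hV
    set P : Submodule Aᵐᵒᵖ A := Submodule.span Aᵐᵒᵖ ({e₂} : Set A) with hP
    set Soc : Submodule Aᵐᵒᵖ A := Submodule.span Aᵐᵒᵖ ({a * b} : Set A) with hSoc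
    set S' : Submodule Aᵐᵒᵖ ↥P := Submodule.comap P.subtype Soc with hS'
    have he₂P : e₂ ∈ P := Submodule.mem_span_singleton_self e₂
    set qe : ↥P ⧸ S' := Submodule.Quotient.mk ⟨e₂, he₂P⟩ with hqe_def
    -- scalar action of `k` through the (central) algebra map
    have hσs : ∀ (μ : k) (z : A), (algebraMap k Aᵐᵒᵖ μ) • z = μ • z := by
      intro μ z
      rw [MulOpposite.algebraMap_apply]
      show z * algebraMap k A μ = μ • z
      rw [← Algebra.commutes, ← Algebra.smul_def]
    -- the ring hom `k → End (P/S')`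
    set ψ : k →+* Module.End Aᵐᵒᵖ (↥P ⧸ S') :=
      { toFun := fun μ =>
          { toFun := fun q => algebraMap k Aᵐᵒᵖ μ • q
            map_add' := fun x y => smul_add _ x y
            map_smul' := fun r x => by
              simp only [RingHom.id_apply]
              rw [smul_smul, smul_smul, Algebra.commutes] }
        map_one' := LinearMap.ext fun q => by
          show algebraMap k Aᵐᵒᵖ 1 • q = q
          rw [map_one, one_smul]
        map_mul' := fun μ ν => LinearMap.ext fun q => by
          show algebraMap k Aᵐᵒᵖ (μ * ν) • q =
            algebraMap k Aᵐᵒᵖ μ • (algebraMap k Aᵐᵒᵖ ν • q)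
          rw [smul_smul, ← _root_.map_mul, mul_comm]
        map_zero' := LinearMap.ext fun q => by
          show algebraMap k Aᵐᵒᵖ 0 • q = 0
          rw [map_zero, zero_smul]
        map_add' := fun μ ν => LinearMap.ext fun q => by
          show algebraMap k Aᵐᵒᵖ (μ + ν) • q = algebraMap k Aᵐᵒᵖ μ • q + algebraMap k Aᵐᵒᵖ ν • q
          rw [map_add, add_smul] } with hψ
    -- every element of the quotient is `r • qe`
    have hgen : ∀ q : ↥P ⧸ S', ∃ r : Aᵐᵒᵖ, r • qe = q := by
      intro q
      obtain ⟨x, rfl⟩ := Submodule.Quotient.mk_surjective S' q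
      obtain ⟨r, hr⟩ := Submodule.mem_span_singleton.mp x.2
      refine ⟨r, ?_⟩
      rw [hqe_def, ← Submodule.Quotient.mk_smul]
      congr 1
      exact Subtype.ext hr
    -- `qe ≠ 0`
    have hqe0 : qe ≠ 0 := by
      intro h0
      rw [hqe_def, Submodule.Quotient.mk_eq_zero, hS', Submodule.mem_comap] at h0
      obtain ⟨r, hr⟩ := Submodule.mem_span_singleton.mp h0
      have h2 : e₂ = B.repr r.unop 1 • (a * b) := by
        rw [← key3 r.unop]
        exact hr.symm
      have h3 := congrArg (fun z => B.repr z 1) h2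
      simp only [← hB1, ← hB4, map_smul, Module.Basis.repr_self, Finsupp.smul_apply,
        Finsupp.single_apply] at h3
      rw [if_pos trivial, if_neg (by decide), smul_zero] at h3
      exact one_ne_zero h3
    haveI : Nontrivial (Module.End Aᵐᵒᵖ (↥P ⧸ S')) := by
      refine ⟨⟨1, 0, fun h => hqe0 ?_⟩⟩
      have := LinearMap.congr_fun h qe
      simpa using this
    -- `ψ` is bijective
    have hinj : Function.Injective ψ := ψ.injective
    have hsurj : Function.Surjective ψ := by
      intro g
      obtain ⟨r, hr⟩ := hgen (g qe)
      set y := r.unop with hy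
      have hqe2 : MulOpposite.op e₂ • qe = qe := by
        rw [hqe_def, ← Submodule.Quotient.mk_smul]
        congr 1
        exact Subtype.ext he₂
      have hmem1 : e₂ * (y * e₂) ∈ P :=
        Submodule.mem_span_singleton.mpr ⟨MulOpposite.op (y * e₂), rfl⟩
      have step1 : g qe = Submodule.Quotient.mk ⟨e₂ * (y * e₂), hmem1⟩ := by
        calc g qe = g (MulOpposite.op e₂ • qe) := by rw [hqe2]
          _ = MulOpposite.op e₂ • g qe := map_smul g _ _
          _ = MulOpposite.op e₂ • (r • qe) := by rw [hr]
          _ = (MulOpposite.op e₂ * r) • qe := (mul_smul _ _ _).symm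
          _ = Submodule.Quotient.mk ⟨e₂ * (y * e₂), hmem1⟩ := by
              rw [hqe_def, ← Submodule.Quotient.mk_smul]
              congr 1
      have step2 : g qe = algebraMap k Aᵐᵒᵖ (B.repr y 1) • qe := by
        rw [step1, hqe_def, ← Submodule.Quotient.mk_smul]
        refine (Submodule.Quotient.eq S').mpr ?_
        rw [hS', Submodule.mem_comap]
        show (e₂ * (y * e₂) - algebraMap k Aᵐᵒᵖ (B.repr y 1) • e₂ : A) ∈ Soc
        rw [hσs, key2]
        have heq : B.repr y 1 • e₂ + B.repr y 4 • (a * b) - B.repr y 1 • e₂ =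
            B.repr y 4 • (a * b) := by abel
        rw [heq, ← hσs]
        exact Submodule.smul_mem _ _ (Submodule.mem_span_singleton_self _)
      refine ⟨B.repr y 1, ?_⟩
      refine LinearMap.ext fun q => ?_
      obtain ⟨s, rfl⟩ := hgen q
      show algebraMap k Aᵐᵒᵖ (B.repr y 1) • (s • qe) = g (s • qe)
      rw [map_smul g, step2, smul_smul, smul_smul, Algebra.commutes]
    -- assemble
    refine ⟨?_⟩
    exact (RingEquiv.mapMatrix (RingEquiv.ofBijective ψ ⟨hinj, hsurj⟩)).trans
      (((endVecRingEquivMatrixEnd (Fin 2) Aᵐᵒᵖ (↥P ⧸ S')).symm).trans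
        (endConjAux ((LinearEquiv.piFinTwo Aᵐᵒᵖ (fun _ => (↥P ⧸ S'))).trans
          (ε.symm.prodCongr ε.symm))))
  · refine ⟨φ, hfe₁, hfe₂, hfa, hfb, ?_⟩
    intro S _ g h hgh
    have key : ∀ x : A, g (φ x) = h (φ x) := fun x => RingHom.congr_fun hgh x
    have hsmul : ∀ (c : k) (x : A), φ (c • x) = c • φ x := fun c x => f.map_smul c x
    refine matrix_epi_aux S g h ?_ ?_ ?_
    · intro c
      have : Matrix.single 0 0 c = φ (c • e₁) := by
        rw [hsmul, hφ]
        show _ = c • f e₁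
        rw [hfe₁, Matrix.smul_single, smul_eq_mul, mul_one]
      rw [this]; exact key (c • e₁)
    · intro c
      have : Matrix.single 1 1 c = φ (c • e₂) := by
        rw [hsmul, hφ]
        show _ = c • f e₂
        rw [hfe₂, Matrix.smul_single, smul_eq_mul, mul_one]
      rw [this]; exact key (c • e₂)
    · intro c
      have : Matrix.single 1 0 c = φ (c • a) := by
        rw [hsmul, hφ]
        show _ = c • f a
        rw [hfa, Matrix.smul_single, smul_eq_mul, mul_one]
      rw [this]; exact key (c • a)

end
end

section
/- Let A be the path algebra of the quiver with vertices 1, 2, arrows α: 1 → 2 and β: 2 → 1, modulo the relation βα = 0. Then A has infinite strong global dimension: for every n ≥ 1 there exists an indecomposable complex in K^b(proj-A) of the form P_2 → P_2 → ... → P_2 → P_1 of length n (with all maps induced by αβ and the last by β or α appropriately) that is minimal. -/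
/-!
STATEMENT 15: Let `A = kQ/(βα)` for the quiver `1 ⇄ 2` (presented by orthogonal idempotents
`e₁, e₂`, arrows `a, b` with `b*a = 0` and basis `{e₁, e₂, a, b, a*b}`).  Then `A` has
infinite strong global dimension: for every `n ≥ 1` there is a minimal indecomposable
complex in `K^b(proj-A)` of the form `P₂ → P₂ → ... → P₂ → P₁` of length `n`.
Right `A`-modules are modelled as `Aᵐᵒᵖ`-modules; minimality means that all differentials
land in the radical (intersection of maximal submodules).
-/

open CategoryTheory

universe u

noncomputable section

section Aux
variable {A : Type u} [Ring A]

/-- Left multiplication by `c` as an `Aᵐᵒᵖ`-linear endomorphism of `A`. -/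
def lmul (c : A) : A →ₗ[Aᵐᵒᵖ] A where
  toFun x := c * x
  map_add' := mul_add c
  map_smul' r x := by simp [MulOpposite.smul_eq_mul_unop, mul_assoc]

@[simp] lemma lmul_apply (c x : A) : lmul c x = c * x := rfl

/-- Context: the data of the algebra presentation together with the length `n`. -/
structure Ctx (A : Type u) [Ring A] : Type u where
  e₁ : A
  e₂ : A
  a : A
  b : A
  n : ℤ
  hn : 1 ≤ n
  he₁ : e₁ * e₁ = e₁
  he₂ : e₂ * e₂ = e₂
  e₁e₂ : e₁ * e₂ = 0
  e₂e₁ : e₂ * e₁ = 0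
  e₁a : e₁ * a = 0
  e₁b : e₁ * b = b
  e₂a : e₂ * a = a
  e₂b : e₂ * b = 0
  ae₁ : a * e₁ = a
  ae₂ : a * e₂ = 0
  be₁ : b * e₁ = 0
  be₂ : b * e₂ = b
  aa : a * a = 0
  bb : b * b = 0
  ba : b * a = 0

lemma mem_span_iff (e x : A) :
    x ∈ Submodule.span Aᵐᵒᵖ {e} ↔ ∃ y : A, e * y = x := by
  rw [Submodule.mem_span_singleton]
  constructor
  · rintro ⟨r, rfl⟩; exact ⟨r.unop, rfl⟩
  · rintro ⟨y, rfl⟩; exact ⟨MulOpposite.op y, rfl⟩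

namespace Ctx
variable {A : Type u} [Ring A] (c : Ctx A)

lemma e₂ab : c.e₂ * (c.a * c.b) = c.a * c.b := by rw [← mul_assoc, c.e₂a]
lemma abe₂ : (c.a * c.b) * c.e₂ = c.a * c.b := by rw [mul_assoc, c.be₂]
lemma e₁ab : c.e₁ * (c.a * c.b) = 0 := by rw [← mul_assoc, c.e₁a, zero_mul]
lemma abe₁ : (c.a * c.b) * c.e₁ = 0 := by rw [mul_assoc, c.be₁, mul_zero]
lemma ab_a : (c.a * c.b) * c.a = 0 := by rw [mul_assoc, c.ba, mul_zero]
lemma ab_b : (c.a * c.b) * c.b = 0 := by rw [mul_assoc, c.bb, mul_zero]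
lemma a_ab : c.a * (c.a * c.b) = 0 := by rw [← mul_assoc, c.aa, zero_mul]
lemma b_ab : c.b * (c.a * c.b) = 0 := by rw [← mul_assoc, c.ba, zero_mul]
lemma ab_ab : (c.a * c.b) * (c.a * c.b) = 0 := by rw [← mul_assoc, c.ab_a, zero_mul]

/-- The submodule (term) in degree `i`. -/
def S (i : ℤ) : Submodule Aᵐᵒᵖ A :=
  if 0 ≤ i ∧ i < c.n then Submodule.span Aᵐᵒᵖ {c.e₂}
  else if i = c.n then Submodule.span Aᵐᵒᵖ {c.e₁}
  else ⊥

/-- The multiplier of the differential out of degree `i`. -/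
def cm (i : ℤ) : A :=
  if 0 ≤ i ∧ i < c.n - 1 then c.a * c.b
  else if i = c.n - 1 then c.b
  else 0

lemma S_pos {i : ℤ} (h0 : 0 ≤ i) (h1 : i < c.n) :
    c.S i = Submodule.span Aᵐᵒᵖ {c.e₂} := if_pos ⟨h0, h1⟩

lemma S_n : c.S c.n = Submodule.span Aᵐᵒᵖ {c.e₁} := by
  rw [S, if_neg (by omega), if_pos rfl]

lemma S_bot {i : ℤ} (h : i < 0 ∨ c.n < i) : c.S i = ⊥ := by
  have hn := c.hn
  rw [S, if_neg (by omega), if_neg (by omega)]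

lemma cm_ab {i : ℤ} (h0 : 0 ≤ i) (h1 : i < c.n - 1) : c.cm i = c.a * c.b :=
  if_pos ⟨h0, h1⟩

lemma cm_b : c.cm (c.n - 1) = c.b := by
  rw [cm, if_neg (by omega), if_pos rfl]

lemma cm_zero {i : ℤ} (h : i < 0 ∨ c.n - 1 < i) : c.cm i = 0 := by
  have hn := c.hn
  rw [cm, if_neg (by omega), if_neg (by omega)]

lemma cm_mul_cm (i j : ℤ) : c.cm j * c.cm i = 0 := by
  have h1 : ∀ x y : A, (x = c.a * c.b ∨ x = c.b ∨ x = 0) →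
      (y = c.a * c.b ∨ y = c.b ∨ y = 0) → y * x = 0 := by
    rintro x y (rfl | rfl | rfl) (rfl | rfl | rfl) <;>
      simp [c.ab_ab, c.ab_b, c.b_ab, c.bb]
  have hx : ∀ m : ℤ, (c.cm m = c.a * c.b ∨ c.cm m = c.b ∨ c.cm m = 0) := by
    intro m
    rw [cm]
    split
    · exact Or.inl rfl
    · split
      · exact Or.inr (Or.inl rfl)
      · exact Or.inr (Or.inr rfl)
  exact h1 _ _ (hx i) (hx j)

lemma mapsTo (i : ℤ) : ∀ x ∈ c.S i, lmul (c.cm i) x ∈ c.S (i + 1) := by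
  intro x hx
  simp only [lmul_apply]
  by_cases h1 : 0 ≤ i ∧ i < c.n - 1
  · rw [c.cm_ab h1.1 h1.2]
    rw [c.S_pos h1.1 (by omega)] at hx
    rw [c.S_pos (by omega) (by omega), mem_span_iff]
    obtain ⟨y, rfl⟩ := (mem_span_iff _ _).1 hx
    refine ⟨c.a * c.b * y, ?_⟩
    simp only [← mul_assoc]
    rw [c.e₂a, c.abe₂]
  · by_cases h2 : i = c.n - 1
    · subst h2
      have hn := c.hn
      rw [c.cm_b]
      rw [c.S_pos (by omega) (by omega)] at hx
      rw [sub_add_cancel, c.S_n, mem_span_iff]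
      obtain ⟨y, rfl⟩ := (mem_span_iff _ _).1 hx
      refine ⟨c.b * y, ?_⟩
      simp only [← mul_assoc]
      rw [c.e₁b, c.be₂]
    · rw [c.cm_zero (by omega), zero_mul]
      exact Submodule.zero_mem _

/-- The differential as a map between the chosen modules. -/
def Kd (i : ℤ) : ModuleCat.of Aᵐᵒᵖ ↥(c.S i) ⟶ ModuleCat.of Aᵐᵒᵖ ↥(c.S (i + 1)) :=
  ModuleCat.ofHom ((lmul (c.cm i)).restrict (c.mapsTo i))

@[simp] lemma Kd_val (i : ℤ) (x : ↥(c.S i)) : (c.Kd i x).val = c.cm i * x.val := rfl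

/-- The complex. -/
@[reducible] def K : CochainComplex (ModuleCat.{u} Aᵐᵒᵖ) ℤ where
  X i := ModuleCat.of Aᵐᵒᵖ ↥(c.S i)
  d i j := if h : i + 1 = j then c.Kd i ≫ eqToHom (by rw [h]) else 0
  shape i j h := dif_neg h
  d_comp_d' i j l hij hjl := by
    simp only [ComplexShape.up_Rel] at hij hjl
    subst hij; subst hjl
    simp only [dif_pos rfl, eqToHom_refl, Category.comp_id]
    apply ModuleCat.hom_ext
    apply LinearMap.ext
    intro x
    refine Subtype.ext ?_
    show c.cm (i + 1) * (c.cm i * x.val) = (0 : A)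
    rw [← mul_assoc, c.cm_mul_cm, zero_mul]

lemma K_X (i : ℤ) : c.K.X i = ModuleCat.of Aᵐᵒᵖ ↥(c.S i) := rfl

lemma K_d (i : ℤ) : c.K.d i (i + 1) = c.Kd i := by
  simp [K]

lemma K_d_val {i j : ℤ} (h : i + 1 = j) (x : ↥(c.S i)) :
    (c.K.d i j x).val = c.cm i * x.val := by
  subst h
  rw [c.K_d]
  rfl

lemma mem_S_pos {i : ℤ} (h0 : 0 ≤ i) (h1 : i < c.n) : c.e₂ ∈ c.S i := by
  rw [c.S_pos h0 h1]; exact Submodule.mem_span_singleton_self _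

lemma mem_S_n : c.e₁ ∈ c.S c.n := by
  rw [c.S_n]; exact Submodule.mem_span_singleton_self _

lemma gen_S_pos {i : ℤ} (h0 : 0 ≤ i) (h1 : i < c.n) :
    ∀ x : ↥(c.S i), ∃ y : A, c.e₂ * y = x.val := by
  rintro ⟨v, hv⟩
  rw [c.S_pos h0 h1, mem_span_iff] at hv
  exact hv

lemma gen_S_n : ∀ x : ↥(c.S c.n), ∃ y : A, c.e₁ * y = x.val := by
  rintro ⟨v, hv⟩
  rw [c.S_n, mem_span_iff] at hv
  exact hv

end Ctx

/-- Applying an `Aᵐᵒᵖ`-linear map on a cyclic submodule is determined by the generator. -/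
lemma apply_gen {A : Type u} [Ring A] {M : Type u} [AddCommGroup M] [Module Aᵐᵒᵖ M]
    (p : Submodule Aᵐᵒᵖ A) (e : A) (he : e ∈ p)
    (hgen : ∀ x : ↥p, ∃ y : A, e * y = x.val)
    (g : ↥p →ₗ[Aᵐᵒᵖ] M) (x : ↥p) :
    ∃ y : A, e * y = x.val ∧ g x = MulOpposite.op y • g ⟨e, he⟩ := by
  obtain ⟨y, hy⟩ := hgen x
  refine ⟨y, hy, ?_⟩
  have hx : x = MulOpposite.op y • (⟨e, he⟩ : ↥p) := by
    refine Subtype.ext ?_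
    show x.val = e * y
    exact hy.symm
  rw [hx, map_smul]

/-- `A` is projective over `Aᵐᵒᵖ`. -/
lemma projective_self_op {A : Type u} [Ring A] : Module.Projective Aᵐᵒᵖ A := by
  refine Module.Projective.of_equiv (R := Aᵐᵒᵖ) (S := Aᵐᵒᵖ) (M := Aᵐᵒᵖ)
    (σ := RingHom.id _) (σ' := RingHom.id _) ?_
  exact
    { toFun := MulOpposite.unop
      invFun := MulOpposite.op
      map_add' := fun x y => rfl
      map_smul' := fun r x => rfl
      left_inv := fun x => rfl
      right_inv := fun x => rfl }

/-- The cyclic right ideal generated by an idempotent is projective. -/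
lemma projective_span_idem {A : Type u} [Ring A] (e : A) (he : e * e = e) :
    Module.Projective Aᵐᵒᵖ ↥(Submodule.span Aᵐᵒᵖ {e}) := by
  have : Module.Projective Aᵐᵒᵖ A := projective_self_op
  refine Module.Projective.of_split (Submodule.span Aᵐᵒᵖ {e}).subtype
    (LinearMap.codRestrict _ (lmul e) ?_) ?_
  · intro x
    rw [mem_span_iff]
    exact ⟨x, rfl⟩
  · apply LinearMap.ext
    intro x
    refine Subtype.ext ?_
    obtain ⟨y, hy⟩ := (mem_span_iff e x.val).1 x.2
    show e * x.val = x.val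
    rw [← hy, ← mul_assoc, he]

end Aux

section Coef
variable {k A : Type u} [Field k] [Ring A] [Algebra k A]

lemma basis_vals {c : Ctx A} {B : Module.Basis (Fin 5) k A}
    (hB : ⇑B = ![c.e₁, c.e₂, c.a, c.b, c.a * c.b]) :
    B 0 = c.e₁ ∧ B 1 = c.e₂ ∧ B 2 = c.a ∧ B 3 = c.b ∧ B 4 = c.a * c.b := by
  rw [hB]
  refine ⟨rfl, rfl, rfl, rfl, rfl⟩

lemma decomp (c : Ctx A) (B : Module.Basis (Fin 5) k A)
    (hB : ⇑B = ![c.e₁, c.e₂, c.a, c.b, c.a * c.b]) (y : A) :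
    ∃ c0 c1 c2 c3 c4 : k,
      y = c0 • c.e₁ + c1 • c.e₂ + c2 • c.a + c3 • c.b + c4 • (c.a * c.b) := by
  obtain ⟨h0, h1, h2, h3, h4⟩ := basis_vals hB
  refine ⟨B.repr y 0, B.repr y 1, B.repr y 2, B.repr y 3, B.repr y 4, ?_⟩
  have h := B.sum_repr y
  rw [Fin.sum_univ_five, h0, h1, h2, h3, h4] at h
  exact h.symm

lemma e1_ne (c : Ctx A) (B : Module.Basis (Fin 5) k A)
    (hB : ⇑B = ![c.e₁, c.e₂, c.a, c.b, c.a * c.b]) : c.e₁ ≠ 0 := by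
  have := B.ne_zero 0
  rwa [(basis_vals hB).1] at this

lemma b_ne (c : Ctx A) (B : Module.Basis (Fin 5) k A)
    (hB : ⇑B = ![c.e₁, c.e₂, c.a, c.b, c.a * c.b]) : c.b ≠ 0 := by
  have := B.ne_zero 3
  rwa [(basis_vals hB).2.2.2.1] at this

lemma ab_ne (c : Ctx A) (B : Module.Basis (Fin 5) k A)
    (hB : ⇑B = ![c.e₁, c.e₂, c.a, c.b, c.a * c.b]) : c.a * c.b ≠ 0 := by
  have := B.ne_zero 4
  rwa [(basis_vals hB).2.2.2.2] at this

lemma smul_cancel {x : A} (hx : x ≠ 0) {l m : k} (h : l • x = m • x) : l = m := by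
  have : (l - m) • x = 0 := by rw [sub_smul, h, sub_self]
  rcases smul_eq_zero.1 this with h' | h'
  · exact sub_eq_zero.1 h'
  · exact absurd h' hx

/-- Products of `e₂ * y` with the generators. -/
lemma e₂mul (c : Ctx A) (B : Module.Basis (Fin 5) k A)
    (hB : ⇑B = ![c.e₁, c.e₂, c.a, c.b, c.a * c.b]) (y : A) :
    ∃ c1 c2 c4 : k, c.e₂ * y = c1 • c.e₂ + c2 • c.a + c4 • (c.a * c.b) := by
  obtain ⟨c0, c1, c2, c3, c4, rfl⟩ := decomp c B hB y
  refine ⟨c1, c2, c4, ?_⟩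
  simp only [mul_add, mul_smul_comm, c.e₂e₁, c.he₂, c.e₂a, c.e₂b, c.e₂ab, smul_zero]
  abel

lemma e₁mul (c : Ctx A) (B : Module.Basis (Fin 5) k A)
    (hB : ⇑B = ![c.e₁, c.e₂, c.a, c.b, c.a * c.b]) (y : A) :
    ∃ c0 c3 : k, c.e₁ * y = c0 • c.e₁ + c3 • c.b := by
  obtain ⟨c0, c1, c2, c3, c4, rfl⟩ := decomp c B hB y
  refine ⟨c0, c3, ?_⟩
  simp only [mul_add, mul_smul_comm, c.he₁, c.e₁e₂, c.e₁a, c.e₁b, c.e₁ab, smul_zero]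
  abel

lemma abmul (c : Ctx A) (B : Module.Basis (Fin 5) k A)
    (hB : ⇑B = ![c.e₁, c.e₂, c.a, c.b, c.a * c.b]) (y : A) :
    ∃ cc : k, (c.a * c.b) * y = cc • (c.a * c.b) := by
  obtain ⟨c0, c1, c2, c3, c4, rfl⟩ := decomp c B hB y
  refine ⟨c1, ?_⟩
  simp only [mul_add, mul_smul_comm, c.abe₁, c.abe₂, c.ab_a, c.ab_b, c.ab_ab, smul_zero]
  abel

lemma bmul (c : Ctx A) (B : Module.Basis (Fin 5) k A)
    (hB : ⇑B = ![c.e₁, c.e₂, c.a, c.b, c.a * c.b]) (y : A) :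
    ∃ cc : k, c.b * y = cc • c.b := by
  obtain ⟨c0, c1, c2, c3, c4, rfl⟩ := decomp c B hB y
  refine ⟨c1, ?_⟩
  simp only [mul_add, mul_smul_comm, c.be₁, c.be₂, c.ba, c.bb, c.b_ab, smul_zero]
  abel

end Coef

lemma smul_gen_fix {A : Type u} [Ring A] {M : Type u} [AddCommGroup M] [Module Aᵐᵒᵖ M]
    (p : Submodule Aᵐᵒᵖ A) (e : A) (he : e ∈ p) (hee : e * e = e)
    (g : ↥p →ₗ[Aᵐᵒᵖ] M) : g ⟨e, he⟩ = MulOpposite.op e • g ⟨e, he⟩ := by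
  have h : (MulOpposite.op e • (⟨e, he⟩ : ↥p)) = ⟨e, he⟩ := by
    refine Subtype.ext ?_
    show e * e = e
    exact hee
  conv_lhs => rw [← h]
  rw [map_smul]

section Forms
variable {k A : Type u} [Field k] [Ring A] [Algebra k A] (c : Ctx A)
  (B : Module.Basis (Fin 5) k A) (hB : ⇑B = ![c.e₁, c.e₂, c.a, c.b, c.a * c.b])

include B hB

lemma val_form_e₂ {i' : ℤ} (h0 : 0 ≤ i') (h1 : i' < c.n)
    (w : ↥(c.S i')) (hw : w.val * c.e₂ = w.val) :
    ∃ c1 c4 : k, w.val = c1 • c.e₂ + c4 • (c.a * c.b) := by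
  obtain ⟨y, hy⟩ := c.gen_S_pos h0 h1 w
  obtain ⟨c1, c2, c4, hf⟩ := e₂mul c B hB y
  rw [hy] at hf
  refine ⟨c1, c4, ?_⟩
  have : w.val * c.e₂ = c1 • c.e₂ + c4 • (c.a * c.b) := by
    rw [hf, add_mul, add_mul, smul_mul_assoc, smul_mul_assoc, smul_mul_assoc,
      c.he₂, c.ae₂, c.abe₂, smul_zero, add_zero]
  rw [← hw, this]

lemma val_form_a {i' : ℤ} (h0 : 0 ≤ i') (h1 : i' < c.n)
    (w : ↥(c.S i')) (hw : w.val * c.e₁ = w.val) :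
    ∃ c2 : k, w.val = c2 • c.a := by
  obtain ⟨y, hy⟩ := c.gen_S_pos h0 h1 w
  obtain ⟨c1, c2, c4, hf⟩ := e₂mul c B hB y
  rw [hy] at hf
  refine ⟨c2, ?_⟩
  have : w.val * c.e₁ = c2 • c.a := by
    rw [hf, add_mul, add_mul, smul_mul_assoc, smul_mul_assoc, smul_mul_assoc,
      c.e₂e₁, c.ae₁, c.abe₁, smul_zero, smul_zero, zero_add, add_zero]
  rw [← hw, this]

lemma val_form_e₁ (w : ↥(c.S c.n)) (hw : w.val * c.e₁ = w.val) :
    ∃ c0 : k, w.val = c0 • c.e₁ := by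
  obtain ⟨y, hy⟩ := c.gen_S_n w
  obtain ⟨c0, c3, hf⟩ := e₁mul c B hB y
  rw [hy] at hf
  refine ⟨c0, ?_⟩
  have : w.val * c.e₁ = c0 • c.e₁ := by
    rw [hf, add_mul, smul_mul_assoc, smul_mul_assoc, c.he₁, c.be₁, smul_zero, add_zero]
  rw [← hw, this]

/-- Every endomorphism of the degree-`n` term is multiplication by a scalar. -/
lemma scalar_on (g : ↥(c.S c.n) →ₗ[Aᵐᵒᵖ] ↥(c.S c.n)) :
    ∃ ν : k, ∀ x : ↥(c.S c.n), (g x).val = ν • x.val := by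
  have hfix := smul_gen_fix (c.S c.n) c.e₁ c.mem_S_n c.he₁ g
  have hval : (g ⟨c.e₁, c.mem_S_n⟩).val * c.e₁ = (g ⟨c.e₁, c.mem_S_n⟩).val := by
    conv_rhs => rw [hfix]
    rfl
  obtain ⟨ν, hν⟩ := val_form_e₁ c B hB _ hval
  refine ⟨ν, fun x => ?_⟩
  obtain ⟨y, hy, hgx⟩ := apply_gen (c.S c.n) c.e₁ c.mem_S_n c.gen_S_n g x
  rw [hgx]
  show (g ⟨c.e₁, c.mem_S_n⟩).val * y = ν • x.val
  rw [hν, smul_mul_assoc, hy]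

/-- Any map `S n → S (n-1)` composed with the last differential is zero. -/
lemma comp_dn_zero (g : ↥(c.S c.n) →ₗ[Aᵐᵒᵖ] ↥(c.S (c.n - 1)))
    (x : ↥(c.S c.n)) : c.K.d (c.n - 1) c.n (g x) = 0 := by
  have hn := c.hn
  have hfix := smul_gen_fix (c.S c.n) c.e₁ c.mem_S_n c.he₁ g
  have hval : (g ⟨c.e₁, c.mem_S_n⟩).val * c.e₁ = (g ⟨c.e₁, c.mem_S_n⟩).val := by
    conv_rhs => rw [hfix]
    rfl
  obtain ⟨c2, hc2⟩ := val_form_a c B hB (by omega) (by omega) _ hval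
  obtain ⟨y, hy, hgx⟩ := apply_gen (c.S c.n) c.e₁ c.mem_S_n c.gen_S_n g x
  refine Subtype.ext ?_
  rw [c.K_d_val (by omega)]
  show c.cm (c.n - 1) * (g x).val = (0 : ↥(c.S c.n)).val
  rw [hgx]
  show c.cm (c.n - 1) * ((g ⟨c.e₁, c.mem_S_n⟩).val * y) = _
  rw [c.cm_b, hc2, smul_mul_assoc, mul_smul_comm, ← mul_assoc, c.ba, zero_mul,
    smul_zero]
  rfl

omit B hB in
lemma d_out_n_zero (x : ↥(c.S c.n)) : c.K.d c.n (c.n + 1) x = 0 := by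
  have hn := c.hn
  refine Subtype.ext ?_
  rw [c.K_d_val rfl, c.cm_zero (by omega), zero_mul]
  rfl

/-- Homotopic maps agree strictly in degree `n`. -/
lemma homotopy_at_n {F G : c.K ⟶ c.K} (h : Homotopy F G) (x : ↥(c.S c.n)) :
    F.f c.n x = G.f c.n x := by
  have hc := h.comm c.n
  have h1 : dNext c.n h.hom = c.K.d c.n (c.n + 1) ≫ h.hom (c.n + 1) c.n :=
    dNext_eq h.hom (by simp [ComplexShape.up_Rel])
  have h2 : prevD c.n h.hom = h.hom c.n (c.n - 1) ≫ c.K.d (c.n - 1) c.n :=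
    prevD_eq h.hom (by simp [ComplexShape.up_Rel])
  rw [h1, h2] at hc
  have hx := congrArg (fun (m : c.K.X c.n ⟶ c.K.X c.n) => m x) hc
  beta_reduce at hx
  rw [hx]
  have hsplit : (c.K.d c.n (c.n + 1) ≫ h.hom (c.n + 1) c.n + h.hom c.n (c.n - 1) ≫ c.K.d (c.n - 1) c.n + G.f c.n) x
      = (c.K.d c.n (c.n + 1) ≫ h.hom (c.n + 1) c.n) x + (h.hom c.n (c.n - 1) ≫ c.K.d (c.n - 1) c.n) x + G.f c.n x := rfl
  rw [hsplit]
  have hz1 : (c.K.d c.n (c.n+1) ≫ h.hom (c.n+1) c.n) x = 0 := by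
    show h.hom (c.n+1) c.n (c.K.d c.n (c.n+1) x) = 0
    rw [d_out_n_zero, map_zero]
  have hz2 : (h.hom c.n (c.n-1) ≫ c.K.d (c.n-1) c.n) x = 0 := by
    show c.K.d (c.n-1) c.n (h.hom c.n (c.n-1) x) = 0
    exact comp_dn_zero c B hB (h.hom c.n (c.n-1)).hom x
  rw [hz1, hz2, zero_add, zero_add]

/-- All components of a chain map vanishing in degree `n` have radical values on the
generator. -/
lemma chain_w (χ : c.K ⟶ c.K) (hχn : ∀ x : ↥(c.S c.n), χ.f c.n x = 0) :
    ∀ i : ℤ, ∀ (h0 : 0 ≤ i) (h1 : i < c.n),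
      ∃ μ : k, (χ.f i ⟨c.e₂, c.mem_S_pos h0 h1⟩).val = μ • (c.a * c.b) := by
  have hn := c.hn
  suffices h : ∀ m : ℕ, ∀ i : ℤ, ∀ (h0 : 0 ≤ i) (h1 : i < c.n), c.n - 1 - i = m →
      ∃ μ : k, (χ.f i ⟨c.e₂, c.mem_S_pos h0 h1⟩).val = μ • (c.a * c.b) by
    intro i h0 h1
    exact h (c.n - 1 - i).toNat i h0 h1 (by omega)
  intro m
  induction m with
  | zero =>
    intro i h0 h1 hm
    have hi : i = c.n - 1 := by omega
    subst hi
    -- commutation in degree `n-1`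
    have hcomm := χ.comm (c.n - 1) c.n
    have happ := congrArg (fun (f : c.K.X (c.n - 1) ⟶ c.K.X c.n) =>
      f ⟨c.e₂, c.mem_S_pos h0 h1⟩) hcomm
    simp only at happ
    have hL : (c.K.d (c.n - 1) c.n (χ.f (c.n - 1) ⟨c.e₂, c.mem_S_pos h0 h1⟩)).val
        = c.b * (χ.f (c.n - 1) ⟨c.e₂, c.mem_S_pos h0 h1⟩).val := by
      rw [c.K_d_val (by omega), c.cm_b]
    have hR : (χ.f c.n (c.K.d (c.n - 1) c.n ⟨c.e₂, c.mem_S_pos h0 h1⟩)).val = 0 := by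
      rw [hχn]; rfl
    have key : c.b * (χ.f (c.n - 1) ⟨c.e₂, c.mem_S_pos h0 h1⟩).val = 0 := by
      rw [← hL]
      have : (χ.f (c.n - 1) ≫ c.K.d (c.n - 1) c.n) ⟨c.e₂, c.mem_S_pos h0 h1⟩
          = (c.K.d (c.n - 1) c.n ≫ χ.f c.n) ⟨c.e₂, c.mem_S_pos h0 h1⟩ := by rw [hcomm]
      have h2 : (c.K.d (c.n - 1) c.n (χ.f (c.n - 1) ⟨c.e₂, c.mem_S_pos h0 h1⟩))
          = (χ.f c.n (c.K.d (c.n - 1) c.n ⟨c.e₂, c.mem_S_pos h0 h1⟩)) := this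
      rw [h2, hR]
    -- the value has the standard form
    have hfix := smul_gen_fix (c.S (c.n - 1)) c.e₂ (c.mem_S_pos h0 h1) c.he₂
      (χ.f (c.n - 1)).hom
    have hw : (χ.f (c.n - 1) ⟨c.e₂, c.mem_S_pos h0 h1⟩).val * c.e₂
        = (χ.f (c.n - 1) ⟨c.e₂, c.mem_S_pos h0 h1⟩).val :=
      (congrArg Subtype.val hfix).symm
    obtain ⟨c1, c4, hform⟩ := val_form_e₂ c B hB h0 h1 _ hw
    rw [hform, mul_add, mul_smul_comm, mul_smul_comm, c.be₂, c.b_ab, smul_zero,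
      add_zero] at key
    have hc1 : c1 = 0 := by
      rcases smul_eq_zero.1 key with h' | h'
      · exact h'
      · exact absurd h' (b_ne c B hB)
    exact ⟨c4, by rw [hform, hc1, zero_smul, zero_add]⟩
  | succ m ih =>
    intro i h0 h1 hm
    have h1' : i < c.n - 1 := by omega
    obtain ⟨μ', hμ'⟩ := ih (i + 1) (by omega) (by omega) (by omega)
    have hcomm := χ.comm i (i + 1)
    have key : (c.a * c.b) * (χ.f i ⟨c.e₂, c.mem_S_pos h0 h1⟩).val = 0 := by
      have hL : (c.K.d i (i + 1) (χ.f i ⟨c.e₂, c.mem_S_pos h0 h1⟩)).val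
          = (c.a * c.b) * (χ.f i ⟨c.e₂, c.mem_S_pos h0 h1⟩).val := by
        rw [c.K_d_val rfl, c.cm_ab h0 h1']
      have hde : c.K.d i (i + 1) ⟨c.e₂, c.mem_S_pos h0 h1⟩
          = MulOpposite.op (c.a * c.b) •
            (⟨c.e₂, c.mem_S_pos (by omega) (by omega)⟩ : ↥(c.S (i + 1))) := by
        refine Subtype.ext ?_
        rw [c.K_d_val rfl, c.cm_ab h0 h1']
        show (c.a * c.b) * c.e₂ = c.e₂ * (c.a * c.b)
        rw [c.abe₂, c.e₂ab]
      have hR : (χ.f (i + 1) (c.K.d i (i + 1) ⟨c.e₂, c.mem_S_pos h0 h1⟩)).val = 0 := by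
        rw [hde, map_smul]
        show (χ.f (i + 1) ⟨c.e₂, _⟩).val * (c.a * c.b) = 0
        rw [hμ', smul_mul_assoc, c.ab_ab, smul_zero]
      have h2 : (c.K.d i (i + 1) (χ.f i ⟨c.e₂, c.mem_S_pos h0 h1⟩))
          = (χ.f (i + 1) (c.K.d i (i + 1) ⟨c.e₂, c.mem_S_pos h0 h1⟩)) := by
        have : (χ.f i ≫ c.K.d i (i + 1)) ⟨c.e₂, c.mem_S_pos h0 h1⟩
            = (c.K.d i (i + 1) ≫ χ.f (i + 1)) ⟨c.e₂, c.mem_S_pos h0 h1⟩ := by rw [hcomm]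
        exact this
      rw [← hL, h2, hR]
    have hfix := smul_gen_fix (c.S i) c.e₂ (c.mem_S_pos h0 h1) c.he₂ (χ.f i).hom
    have hw : (χ.f i ⟨c.e₂, c.mem_S_pos h0 h1⟩).val * c.e₂
        = (χ.f i ⟨c.e₂, c.mem_S_pos h0 h1⟩).val :=
      (congrArg Subtype.val hfix).symm
    obtain ⟨c1, c4, hform⟩ := val_form_e₂ c B hB h0 h1 _ hw
    rw [hform, mul_add, mul_smul_comm, mul_smul_comm, c.abe₂, c.ab_ab, smul_zero,
      add_zero] at key
    have hc1 : c1 = 0 := by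
      rcases smul_eq_zero.1 key with h' | h'
      · exact h'
      · exact absurd h' (ab_ne c B hB)
    exact ⟨c4, by rw [hform, hc1, zero_smul, zero_add]⟩

/-- A chain endomorphism vanishing strictly in degree `n` squares to zero. -/
lemma sq_zero (χ : c.K ⟶ c.K) (hχn : ∀ x : ↥(c.S c.n), χ.f c.n x = 0) :
    χ ≫ χ = 0 := by
  have hn := c.hn
  have hcomp : ∀ i : ℤ, ∀ x : ↥(c.S i), χ.f i (χ.f i x) = 0 := by
    intro i
    by_cases hcase : 0 ≤ i ∧ i < c.n
    · intro x
      obtain ⟨μ, hμ⟩ := chain_w c B hB χ hχn i hcase.1 hcase.2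
      have hgen := c.gen_S_pos hcase.1 hcase.2
      obtain ⟨y, hy, hgx⟩ := apply_gen (c.S i) c.e₂ (c.mem_S_pos hcase.1 hcase.2)
        hgen (χ.f i).hom x
      have hgg : χ.f i (χ.f i ⟨c.e₂, c.mem_S_pos hcase.1 hcase.2⟩) = 0 := by
        have hrepr : χ.f i ⟨c.e₂, c.mem_S_pos hcase.1 hcase.2⟩
            = MulOpposite.op (μ • (c.a * c.b)) •
              (⟨c.e₂, c.mem_S_pos hcase.1 hcase.2⟩ : ↥(c.S i)) := by
          refine Subtype.ext ?_
          rw [hμ]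
          show μ • (c.a * c.b) = c.e₂ * (μ • (c.a * c.b))
          rw [mul_smul_comm, c.e₂ab]
        refine Subtype.ext ?_
        conv_lhs => rw [hrepr, map_smul]
        show (χ.f i ⟨c.e₂, c.mem_S_pos hcase.1 hcase.2⟩).val * (μ • (c.a * c.b)) = (0 : ↥(c.S i)).val
        rw [hμ, smul_mul_assoc, mul_smul_comm, c.ab_ab, smul_zero, smul_zero]
        rfl
      calc χ.f i (χ.f i x) = χ.f i (MulOpposite.op y • χ.f i ⟨c.e₂, c.mem_S_pos hcase.1 hcase.2⟩) :=
            congrArg (fun t => χ.f i t) hgx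
        _ = MulOpposite.op y • χ.f i (χ.f i ⟨c.e₂, c.mem_S_pos hcase.1 hcase.2⟩) :=
            map_smul _ _ _
        _ = MulOpposite.op y • (0 : ↥(c.S i)) := by rw [hgg]
        _ = 0 := smul_zero _
    · by_cases hi : i = c.n
      · subst hi
        intro x
        rw [hχn x, map_zero]
      · intro x
        have hx0 : x = 0 :=
          Subtype.ext ((Submodule.eq_bot_iff _).1 (c.S_bot (by omega)) x.val x.2)
        rw [hx0, map_zero, map_zero]
  refine HomologicalComplex.hom_ext _ _ ?_
  intro i
  apply ModuleCat.hom_ext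
  apply LinearMap.ext
  intro x
  exact hcomp i x

/-- The differentials land in every maximal submodule. -/
lemma radical_le (i : ℤ) :
    LinearMap.range (c.K.d i (i + 1)).hom ≤
      ⨅ (N : Submodule Aᵐᵒᵖ ↥(c.S (i + 1))) (_ : IsCoatom N), N := by
  have hn := c.hn
  refine le_iInf fun N => le_iInf fun hN => ?_
  rintro z ⟨x, rfl⟩
  by_cases h1 : 0 ≤ i ∧ i < c.n - 1
  · -- the differential is multiplication by `a*b`
    have humem : c.a * c.b ∈ c.S (i + 1) := by
      rw [c.S_pos (by omega) (by omega), mem_span_iff]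
      exact ⟨c.a * c.b, c.e₂ab⟩
    have hamem : c.a ∈ c.S (i + 1) := by
      rw [c.S_pos (by omega) (by omega), mem_span_iff]
      exact ⟨c.a, c.e₂a⟩
    set u : ↥(c.S (i + 1)) := ⟨c.a * c.b, humem⟩ with hu_def
    have hu : u ∈ N := by
      by_cases hu : u ∈ N
      · exact hu
      · exfalso
        have hlt : N < N ⊔ Submodule.span Aᵐᵒᵖ {u} :=
          left_lt_sup.2 fun hle => hu (hle (Submodule.mem_span_singleton_self u))
        have htop := hN.2 _ hlt
        have hva : (⟨c.a, hamem⟩ : ↥(c.S (i + 1))) ∈ N ⊔ Submodule.span Aᵐᵒᵖ {u} := by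
          rw [htop]; exact Submodule.mem_top
        obtain ⟨xN, hxN, z, hz, hsum⟩ := Submodule.mem_sup.1 hva
        obtain ⟨r, rfl⟩ := Submodule.mem_span_singleton.1 hz
        have hz0 : MulOpposite.op c.b • (r • u) = 0 := by
          obtain ⟨cc, hcc⟩ := abmul c B hB r.unop
          refine Subtype.ext ?_
          show ((r • u) : ↥(c.S (i+1))).val * c.b = (0 : A)
          have : ((r • u) : ↥(c.S (i+1))).val = (c.a * c.b) * r.unop := rfl
          rw [this, hcc, smul_mul_assoc, c.ab_b, smul_zero]
        have hueq : u = MulOpposite.op c.b • (⟨c.a, hamem⟩ : ↥(c.S (i + 1))) :=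
          Subtype.ext rfl
        have : u = MulOpposite.op c.b • xN := by
          rw [hueq, ← hsum, smul_add, hz0, add_zero]
        exact hu (this ▸ N.smul_mem _ hxN)
    obtain ⟨y, hy⟩ := c.gen_S_pos (by omega) (by omega) x
    have : c.K.d i (i + 1) x = MulOpposite.op y • u := by
      refine Subtype.ext ?_
      rw [c.K_d_val rfl, c.cm_ab h1.1 h1.2, ← hy]
      show c.a * c.b * (c.e₂ * y) = c.a * c.b * y
      rw [← mul_assoc, c.abe₂]
    rw [this]
    exact N.smul_mem _ hu
  · by_cases h2 : i = c.n - 1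
    · -- the differential is multiplication by `b`
      have hi1 : i + 1 = c.n := by omega
      have humem : c.b ∈ c.S (i + 1) := by
        rw [hi1, c.S_n, mem_span_iff]
        exact ⟨c.b, c.e₁b⟩
      have hamem : c.e₁ ∈ c.S (i + 1) := by
        rw [hi1]; exact c.mem_S_n
      set u : ↥(c.S (i + 1)) := ⟨c.b, humem⟩ with hu_def
      have hu : u ∈ N := by
        by_cases hu : u ∈ N
        · exact hu
        · exfalso
          have hlt : N < N ⊔ Submodule.span Aᵐᵒᵖ {u} :=
            left_lt_sup.2 fun hle => hu (hle (Submodule.mem_span_singleton_self u))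
          have htop := hN.2 _ hlt
          have hva : (⟨c.e₁, hamem⟩ : ↥(c.S (i + 1))) ∈ N ⊔ Submodule.span Aᵐᵒᵖ {u} := by
            rw [htop]; exact Submodule.mem_top
          obtain ⟨xN, hxN, z, hz, hsum⟩ := Submodule.mem_sup.1 hva
          obtain ⟨r, rfl⟩ := Submodule.mem_span_singleton.1 hz
          have hz0 : MulOpposite.op c.b • (r • u) = 0 := by
            obtain ⟨cc, hcc⟩ := bmul c B hB r.unop
            refine Subtype.ext ?_
            show ((r • u) : ↥(c.S (i+1))).val * c.b = (0 : A)
            have : ((r • u) : ↥(c.S (i+1))).val = c.b * r.unop := rfl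
            rw [this, hcc, smul_mul_assoc, c.bb, smul_zero]
          have hueq : u = MulOpposite.op c.b • (⟨c.e₁, hamem⟩ : ↥(c.S (i + 1))) :=
            Subtype.ext (c.e₁b).symm
          have : u = MulOpposite.op c.b • xN := by
            rw [hueq, ← hsum, smul_add, hz0, add_zero]
          exact hu (this ▸ N.smul_mem _ hxN)
      obtain ⟨y, hy⟩ := c.gen_S_pos (by omega) (by omega) x
      have : c.K.d i (i + 1) x = MulOpposite.op y • u := by
        refine Subtype.ext ?_
        have hcm : c.cm i = c.b := by rw [h2]; exact c.cm_b
        rw [c.K_d_val rfl, hcm, ← hy]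
        show c.b * (c.e₂ * y) = c.b * y
        rw [← mul_assoc, c.be₂]
      rw [this]
      exact N.smul_mem _ hu
    · have : c.K.d i (i + 1) x = 0 := by
        refine Subtype.ext ?_
        rw [c.K_d_val rfl, c.cm_zero (by omega), zero_mul]
        rfl
      rw [this]
      exact N.zero_mem

end Forms

/-- Construct a context from the presentation data. -/
def Ctx.mk' {A : Type u} [Ring A] (e₁ e₂ a b : A) (n : ℤ) (hn : 1 ≤ n)
    (h12 : e₁ * e₂ = 0) (h21 : e₂ * e₁ = 0)
    (he₁ : e₁ * e₁ = e₁) (he₂ : e₂ * e₂ = e₂)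
    (ha : e₂ * a * e₁ = a) (hb : e₁ * b * e₂ = b)
    (hrel : b * a = 0) : Ctx A := by
  have e₁a : e₁ * a = 0 := by
    rw [← ha, ← mul_assoc, ← mul_assoc, h12, zero_mul, zero_mul]
  have e₂a : e₂ * a = a := by rw [← ha, ← mul_assoc, ← mul_assoc, he₂]
  have ae₁ : a * e₁ = a := by rw [← ha, mul_assoc, he₁]
  have ae₂ : a * e₂ = 0 := by rw [← ha, mul_assoc, h12, mul_zero]
  have e₁b : e₁ * b = b := by rw [← hb, ← mul_assoc, ← mul_assoc, he₁]
  have be₂ : b * e₂ = b := by rw [← hb, mul_assoc, he₂]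
  have be₁ : b * e₁ = 0 := by rw [← hb, mul_assoc, h21, mul_zero]
  have e₂b : e₂ * b = 0 := by
    rw [← hb, ← mul_assoc, ← mul_assoc, h21, zero_mul, zero_mul]
  have aa : a * a = 0 := by
    have h : a * a = a * (e₂ * a) := by rw [e₂a]
    rw [h, ← mul_assoc, ae₂, zero_mul]
  have bb : b * b = 0 := by
    have h : b * b = b * (e₁ * b) := by rw [e₁b]
    rw [h, ← mul_assoc, be₁, zero_mul]
  exact
    { e₁ := e₁, e₂ := e₂, a := a, b := b, n := n, hn := hn
      he₁ := he₁, he₂ := he₂, e₁e₂ := h12, e₂e₁ := h21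
      e₁a := e₁a, e₁b := e₁b, e₂a := e₂a, e₂b := e₂b
      ae₁ := ae₁, ae₂ := ae₂, be₁ := be₁, be₂ := be₂
      aa := aa, bb := bb, ba := hrel }

section Final
variable {k A : Type u} [Field k] [Ring A] [Algebra k A]

theorem final_aux (c : Ctx A) (B : Module.Basis (Fin 5) k A)
    (hB : ⇑B = ![c.e₁, c.e₂, c.a, c.b, c.a * c.b])
    (P₁ P₂ : Submodule Aᵐᵒᵖ A)
    (hP₁ : P₁ = Submodule.span Aᵐᵒᵖ {c.e₁}) (hP₂ : P₂ = Submodule.span Aᵐᵒᵖ {c.e₂}) :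
    ∃ K : CochainComplex (ModuleCat.{u} Aᵐᵒᵖ) ℤ,
        (∀ i : ℤ, 0 ≤ i → i < c.n → Nonempty (↥(K.X i) ≃ₗ[Aᵐᵒᵖ] ↥P₂)) ∧
        Nonempty (↥(K.X c.n) ≃ₗ[Aᵐᵒᵖ] ↥P₁) ∧
        (∀ i : ℤ, (i < 0 ∨ c.n < i) → Limits.IsZero (K.X i)) ∧
        (∀ i : ℤ, Module.Finite Aᵐᵒᵖ (K.X i) ∧ Projective (K.X i)) ∧
        (∀ i : ℤ, LinearMap.range (K.d i (i + 1)).hom ≤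
          ⨅ (N : Submodule Aᵐᵒᵖ (K.X (i + 1))) (_ : IsCoatom N), N) ∧
        (¬ Limits.IsZero
            ((HomotopyCategory.quotient (ModuleCat.{u} Aᵐᵒᵖ) (ComplexShape.up ℤ)).obj K) ∧
          ∀ φ : ((HomotopyCategory.quotient (ModuleCat.{u} Aᵐᵒᵖ)
                (ComplexShape.up ℤ)).obj K) ⟶
              ((HomotopyCategory.quotient (ModuleCat.{u} Aᵐᵒᵖ)
                (ComplexShape.up ℤ)).obj K),
            φ ≫ φ = φ → φ = 0 ∨
              φ = 𝟙 ((HomotopyCategory.quotient (ModuleCat.{u} Aᵐᵒᵖ)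
                (ComplexShape.up ℤ)).obj K)) := by
  have hn := c.hn
  refine ⟨c.K, ?_, ?_, ?_, ?_, ?_, ?_, ?_⟩
  · -- terms in degrees `0..n-1`
    intro i h0 h1
    refine ⟨LinearEquiv.ofEq _ _ ?_⟩
    rw [c.S_pos h0 h1, hP₂]
  · -- term in degree `n`
    refine ⟨LinearEquiv.ofEq _ _ ?_⟩
    rw [c.S_n, hP₁]
  · -- zero outside `[0,n]`
    intro i hi
    have hsub : Subsingleton ↥(c.S i) := by
      refine ⟨fun x y => Subtype.ext ?_⟩
      have hx := (Submodule.eq_bot_iff _).1 (c.S_bot hi) x.val x.2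
      have hy := (Submodule.eq_bot_iff _).1 (c.S_bot hi) y.val y.2
      rw [hx, hy]
    exact @ModuleCat.isZero_of_subsingleton _ _ (c.K.X i) hsub
  · -- finite and projective
    intro i
    have hSe : ∃ e : A, e * e = e ∧ c.S i = Submodule.span Aᵐᵒᵖ {e} := by
      by_cases h1 : 0 ≤ i ∧ i < c.n
      · exact ⟨c.e₂, c.he₂, c.S_pos h1.1 h1.2⟩
      · by_cases h2 : i = c.n
        · subst h2; exact ⟨c.e₁, c.he₁, c.S_n⟩
        · exact ⟨0, by rw [mul_zero],
            (c.S_bot (by omega)).trans (Submodule.span_zero_singleton _).symm⟩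
    constructor
    · refine Module.Finite.iff_fg.2 ?_
      obtain ⟨e, hee, hS⟩ := hSe
      rw [hS]
      exact Submodule.fg_span_singleton _
    · obtain ⟨e, hee, hS⟩ := hSe
      haveI := projective_span_idem e hee
      have hproj : Module.Projective Aᵐᵒᵖ ↥(c.S i) :=
        Module.Projective.of_equiv (LinearEquiv.ofEq _ _ hS).symm
      exact (IsProjective.iff_projective.{u, u} _).1 hproj
  · -- minimality
    exact fun i => radical_le c B hB i
  · -- nonzero in the homotopy category
    intro hz
    have h00 : (HomotopyCategory.quotient (ModuleCat.{u} Aᵐᵒᵖ)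
        (ComplexShape.up ℤ)).map (𝟙 c.K) =
        (HomotopyCategory.quotient (ModuleCat.{u} Aᵐᵒᵖ) (ComplexShape.up ℤ)).map 0 := by
      rw [CategoryTheory.Functor.map_id, CategoryTheory.Functor.map_zero]
      exact hz.eq_of_src _ _
    have hht := HomotopyCategory.homotopyOfEq _ _ h00
    have h1 := homotopy_at_n c B hB hht ⟨c.e₁, c.mem_S_n⟩
    have h2 : c.e₁ = (0 : A) := congrArg Subtype.val h1
    exact e1_ne c B hB h2
  · -- idempotents split
    intro φ hφ
    obtain ⟨ψ, hψ⟩ := (HomotopyCategory.quotient (ModuleCat.{u} Aᵐᵒᵖ)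
      (ComplexShape.up ℤ)).map_surjective φ
    have hhom : Homotopy (ψ ≫ ψ) ψ :=
      HomotopyCategory.homotopyOfEq _ _ (by rw [Functor.map_comp, hψ, hφ])
    obtain ⟨ν, hν⟩ := scalar_on c B hB (ψ.f c.n).hom
    -- `ν` is idempotent
    have h1 := homotopy_at_n c B hB hhom ⟨c.e₁, c.mem_S_n⟩
    have h2 : ν • (ν • c.e₁) = ν • c.e₁ := by
      have hL : (((ψ ≫ ψ).f c.n) (⟨c.e₁, c.mem_S_n⟩ : ↥(c.S c.n))).val
          = ν • (ν • c.e₁) := by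
        have e1 : ((ψ ≫ ψ).f c.n) (⟨c.e₁, c.mem_S_n⟩ : ↥(c.S c.n))
            = ψ.f c.n (ψ.f c.n ⟨c.e₁, c.mem_S_n⟩) := rfl
        rw [e1]
        exact (hν (ψ.f c.n ⟨c.e₁, c.mem_S_n⟩)).trans
          (congrArg (fun t => ν • t) (hν ⟨c.e₁, c.mem_S_n⟩))
      have hR : ((ψ.f c.n) (⟨c.e₁, c.mem_S_n⟩ : ↥(c.S c.n))).val = ν • c.e₁ :=
        hν ⟨c.e₁, c.mem_S_n⟩
      rw [← hL, ← hR]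
      exact congrArg Subtype.val h1
    have hsq : ν * ν = ν := by
      rw [smul_smul] at h2
      exact smul_cancel (e1_ne c B hB) h2
    rcases eq_or_ne ν 0 with h0 | h0
    · -- `φ = 0`
      left
      have hzero : ∀ x : ↥(c.S c.n), ψ.f c.n x = 0 := by
        intro x
        refine Subtype.ext ((hν x).trans ?_)
        rw [h0, zero_smul]
        rfl
      have hsqz := sq_zero c B hB ψ hzero
      calc φ = φ ≫ φ := hφ.symm
        _ = (HomotopyCategory.quotient _ _).map ψ ≫
            (HomotopyCategory.quotient _ _).map ψ := by rw [hψ]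
        _ = (HomotopyCategory.quotient _ _).map (ψ ≫ ψ) := by rw [Functor.map_comp]
        _ = (HomotopyCategory.quotient _ _).map 0 := by rw [hsqz]
        _ = 0 := Functor.map_zero _ _ _
    · -- `φ = 𝟙`
      right
      have hν1 : ν = 1 := by
        have : ν * ν = ν * 1 := by rw [mul_one, hsq]
        exact mul_left_cancel₀ h0 this
      have hzero : ∀ x : ↥(c.S c.n),
          HomologicalComplex.Hom.f (𝟙 c.K - ψ) c.n x = 0 := by
        intro x
        refine Subtype.ext ?_
        have hsub : (HomologicalComplex.Hom.f (𝟙 c.K - ψ) c.n x).val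
            = x.val - (ψ.f c.n x).val := rfl
        rw [hsub]
        have hxx : ((ψ.f c.n) x).val = x.val := (hν x).trans (by rw [hν1, one_smul])
        show x.val - (ψ.f c.n x).val = 0
        exact sub_eq_zero_of_eq hxx.symm
      have hsqz := sq_zero c B hB (𝟙 c.K - ψ) hzero
      have hmapχ : (HomotopyCategory.quotient (ModuleCat.{u} Aᵐᵒᵖ)
          (ComplexShape.up ℤ)).map (𝟙 c.K - ψ) = 𝟙 _ - φ := by
        rw [Functor.map_sub, CategoryTheory.Functor.map_id, hψ]
      have h00 : (𝟙 _ - φ) ≫ (𝟙 _ - φ) = (0 : _) := by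
        rw [← hmapχ, ← Functor.map_comp, hsqz, Functor.map_zero]
      have hexp : (𝟙 _ - φ) ≫ (𝟙 _ - φ) = 𝟙 _ - φ := by
        simp [CategoryTheory.Preadditive.sub_comp, CategoryTheory.Preadditive.comp_sub, hφ]
      have hfin : 𝟙 _ - φ = 0 := hexp.symm.trans h00
      have := sub_eq_zero.1 hfin
      exact this.symm

end Final

variable {k A : Type u} [Field k] [Ring A] [Algebra k A]

theorem infinite_strong_global_dimension_of_kQ_mod_betaAlpha
    (e₁ e₂ a b : A)
    (hsum : e₁ + e₂ = 1) (h12 : e₁ * e₂ = 0) (h21 : e₂ * e₁ = 0)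
    (he₁ : e₁ * e₁ = e₁) (he₂ : e₂ * e₂ = e₂)
    (ha : e₂ * a * e₁ = a) (hb : e₁ * b * e₂ = b)
    (hrel : b * a = 0)
    (B : Module.Basis (Fin 5) k A) (hB : ⇑B = ![e₁, e₂, a, b, a * b])
    (P₁ P₂ : Submodule Aᵐᵒᵖ A)
    (hP₁ : P₁ = Submodule.span Aᵐᵒᵖ {e₁}) (hP₂ : P₂ = Submodule.span Aᵐᵒᵖ {e₂}) :
    ∀ n : ℕ, 1 ≤ n →
      ∃ K : CochainComplex (ModuleCat.{u} Aᵐᵒᵖ) ℤ,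
        -- the terms are `P₂, ..., P₂, P₁` in degrees `0, ..., n` :
        (∀ i : ℤ, 0 ≤ i → i < n → Nonempty (↥(K.X i) ≃ₗ[Aᵐᵒᵖ] ↥P₂)) ∧
        Nonempty (↥(K.X n) ≃ₗ[Aᵐᵒᵖ] ↥P₁) ∧
        (∀ i : ℤ, (i < 0 ∨ (n : ℤ) < i) → Limits.IsZero (K.X i)) ∧
        -- all terms are finitely generated projective :
        (∀ i : ℤ, Module.Finite Aᵐᵒᵖ (K.X i) ∧ Projective (K.X i)) ∧
        -- minimality: every differential lands in the radical :
        (∀ i : ℤ, LinearMap.range (K.d i (i + 1)).hom ≤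
          ⨅ (N : Submodule Aᵐᵒᵖ (K.X (i + 1))) (_ : IsCoatom N), N) ∧
        -- `K` is indecomposable in the homotopy category `K^b(proj-A)` :
        (¬ Limits.IsZero
            ((HomotopyCategory.quotient (ModuleCat.{u} Aᵐᵒᵖ) (ComplexShape.up ℤ)).obj K) ∧
          ∀ φ : ((HomotopyCategory.quotient (ModuleCat.{u} Aᵐᵒᵖ)
                (ComplexShape.up ℤ)).obj K) ⟶
              ((HomotopyCategory.quotient (ModuleCat.{u} Aᵐᵒᵖ)
                (ComplexShape.up ℤ)).obj K),
            φ ≫ φ = φ → φ = 0 ∨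
              φ = 𝟙 ((HomotopyCategory.quotient (ModuleCat.{u} Aᵐᵒᵖ)
                (ComplexShape.up ℤ)).obj K)) := by
  intro n hn
  exact final_aux
    (Ctx.mk' e₁ e₂ a b (n : ℤ) (by exact_mod_cast hn) h12 h21 he₁ he₂ ha hb hrel)
    B hB P₁ P₂ hP₁ hP₂

end
end
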